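/- arXiv:2007.03249 — 4 statements merged into one kernel-verified Lean document; each statement's English description precedes it below -/
import Mathlib

section
/- A sequence α ∈ {0,1}^ω is Bernoulli-normal if and only if it is Postnikov-admissible. -/
open Filter

/-- `α` is Bernoulli-normal (p-distributed): every nonempty finite word `w` occurs as a factor
of `α` with limiting frequency `μ_p(w) = p ^ (number of ones) * (1-p) ^ (number of zeros)`. -/
def BernoulliNormal (p : ℝ) (α : ℕ → Bool) : Prop :=
  ∀ w : List Bool, 1 ≤ w.length →
    Tendsto (fun N : ℕ =>
      (((Finset.range N).filter fun i =>
        ∀ j : Fin w.length, α (i + (j : ℕ)) = w.get j).card : ℝ) / N)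
      atTop (nhds ((w.map fun a => if a then p else 1 - p).prod))

/-- `α` is admissible in the sense of Postnikov: for every `m ≥ 1` and every nonempty set of
positions `R ⊆ {0, …, m-1}`, the limiting frequency (over `n`) of having a `1` at all the
positions of `R` in the `n`-th block `α (n*m), …, α (n*m + m - 1)` exists and equals
`p ^ R.card`. -/
def PostnikovAdmissible (p : ℝ) (α : ℕ → Bool) : Prop :=
  ∀ m : ℕ, 1 ≤ m → ∀ R : Finset (Fin m), R.Nonempty →
    Tendsto (fun N : ℕ =>
      (((Finset.range N).filter fun n => ∀ i ∈ R, α (n * m + (i : ℕ)) = true).card : ℝ) / N)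
      atTop (nhds (p ^ R.card))


namespace BNPA

set_option maxHeartbeats 2000000

open Finset

variable {p : ℝ}

/-- product measure weight of a word `W`. -/
def mu (p : ℝ) {L : ℕ} (W : Fin L → Bool) : ℝ := ∏ j, (if W j then p else 1 - p)

lemma mu_nonneg (hp0 : 0 < p) (hp1 : p < 1) {L : ℕ} (W : Fin L → Bool) : 0 ≤ mu p W :=
  Finset.prod_nonneg fun j _ => by split <;> linarith

lemma mu_le_one (hp0 : 0 < p) (hp1 : p < 1) {L : ℕ} (W : Fin L → Bool) : mu p W ≤ 1 :=
  Finset.prod_le_one (fun j _ => by split <;> linarith)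
    (fun j _ => by split <;> linarith)

lemma sum_prod_eq (L : ℕ) (f : Fin L → Bool → ℝ) :
    ∑ W : Fin L → Bool, ∏ j : Fin L, f j (W j) = ∏ j : Fin L, ∑ b : Bool, f j b := by
  rw [Finset.prod_univ_sum, Fintype.piFinset_univ]

lemma sum_mu_ind (hp0 : 0 < p) (hp1 : p < 1) {L : ℕ} (S : Finset (Fin L)) :
    ∑ W : Fin L → Bool, mu p W * (if (∀ i ∈ S, W i = true) then (1:ℝ) else 0)
      = p ^ S.card := by
  classical
  have h1 : ∀ W : Fin L → Bool,
      mu p W * (if (∀ i ∈ S, W i = true) then (1:ℝ) else 0)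
        = ∏ j : Fin L, ((if W j then p else 1 - p) *
            (if j ∈ S then (if W j then (1:ℝ) else 0) else 1)) := by
    intro W
    rw [Finset.prod_mul_distrib]
    unfold mu
    congr 1
    rw [Finset.prod_ite_mem, Finset.univ_inter, Finset.prod_boole]
    simp
  simp only [h1]
  rw [sum_prod_eq L (fun j b => ((if b then p else 1 - p) *
        (if j ∈ S then (if b then (1:ℝ) else 0) else 1)))]
  have h3 : ∀ j : Fin L, (∑ b : Bool, (if b then p else 1 - p) *
      (if j ∈ S then (if b then (1:ℝ) else 0) else 1)) = if j ∈ S then p else 1 := by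
    intro j
    rw [Fintype.sum_bool]
    by_cases hj : j ∈ S <;> simp [hj]
  rw [Finset.prod_congr rfl (fun j _ => h3 j), Finset.prod_ite_mem, Finset.univ_inter,
    Finset.prod_const]

lemma sum_mu (hp0 : 0 < p) (hp1 : p < 1) (L : ℕ) :
    ∑ W : Fin L → Bool, mu p W = 1 := by
  have := sum_mu_ind hp0 hp1 (L := L) ∅
  simpa using this

/-- aligned occurrences embed into all occurrences. -/
lemma card_aligned_le (P : ℕ → Prop) [DecidablePred P] (m N q : ℕ) (hq : q < m) :
    ((Finset.range N).filter fun n => P (n * m + q)).card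
      ≤ ((Finset.range (N * m)).filter P).card := by
  apply Finset.card_le_card_of_injOn (fun n => n * m + q)
  · intro n hn
    simp only [Finset.mem_coe, Finset.mem_filter, Finset.mem_range] at *
    refine ⟨?_, hn.2⟩
    calc n * m + q < n * m + m := by omega
      _ = (n + 1) * m := by ring
      _ ≤ N * m := Nat.mul_le_mul_right m hn.1
  · intro a _ b _ h
    simp only at h
    have hm : 0 < m := by omega
    have := Nat.add_right_cancel h
    exact Nat.eq_of_mul_eq_mul_right hm this

/-- lower bound: sum over residues of aligned counts is at most the total count. -/
lemma sum_aligned_le (P : ℕ → Prop) [DecidablePred P] (m L N : ℕ) (hL : 1 ≤ L) (hLm : L ≤ m) :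
    (∑ q ∈ Finset.range (m - L + 1),
      ((Finset.range (N / m)).filter fun n => P (n * m + q)).card)
        ≤ ((Finset.range N).filter P).card := by
  classical
  have hm : 0 < m := by omega
  have key : ∀ q ∈ Finset.range (m - L + 1),
      ((Finset.range (N / m)).filter fun n => P (n * m + q)).card
        = ((((Finset.range (N / m)).filter fun n => P (n * m + q)).image
            fun n => n * m + q)).card := by
    intro q _
    rw [Finset.card_image_of_injOn]
    intro a _ b _ h
    simp only at h
    exact Nat.eq_of_mul_eq_mul_right hm (Nat.add_right_cancel h)
  rw [Finset.sum_congr rfl key, ← Finset.card_biUnion]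
  · apply Finset.card_le_card
    intro i hi
    simp only [Finset.mem_biUnion, Finset.mem_image, Finset.mem_filter, Finset.mem_range] at hi
    obtain ⟨q, hq, n, ⟨hn, hP⟩, rfl⟩ := hi
    simp only [Finset.mem_filter, Finset.mem_range]
    refine ⟨?_, hP⟩
    have hq' : q < m := by omega
    calc n * m + q < (n + 1) * m := by nlinarith
      _ ≤ (N / m) * m := Nat.mul_le_mul_right m hn
      _ ≤ N := Nat.div_mul_le_self N m
  · intro x hx y hy hxy
    rw [Function.onFun, Finset.disjoint_left]
    intro a ha ha'
    simp only [Finset.mem_image, Finset.mem_filter, Finset.mem_range] at ha ha'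
    obtain ⟨n, _, rfl⟩ := ha
    obtain ⟨n', _, h⟩ := ha'
    apply hxy
    have hx' : x < m := by simp only [Finset.mem_coe, Finset.mem_range] at hx; omega
    have hy' : y < m := by simp only [Finset.mem_coe, Finset.mem_range] at hy; omega
    have e1 : (n' * m + y) % m = y := by
      rw [Nat.add_comm, Nat.add_mul_mod_self_right, Nat.mod_eq_of_lt hy']
    have e2 : (n * m + x) % m = x := by
      rw [Nat.add_comm, Nat.add_mul_mod_self_right, Nat.mod_eq_of_lt hx']
    rw [← e2, ← h, e1]

/-- upper bound: total count is at most sum of aligned counts plus boundary terms. -/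
lemma card_le_sum_aligned (P : ℕ → Prop) [DecidablePred P] (m L N : ℕ) (hL : 1 ≤ L)
    (hLm : L ≤ m) :
    ((Finset.range N).filter P).card
      ≤ (∑ q ∈ Finset.range (m - L + 1),
          ((Finset.range (N / m + 1)).filter fun n => P (n * m + q)).card)
        + (L - 1) * (N / m + 1) := by
  classical
  have hm : 0 < m := by omega
  have hsub : ((Finset.range N).filter P) ⊆
      (Finset.range m).biUnion fun q =>
        ((Finset.range (N / m + 1)).filter fun n => P (n * m + q)).image fun n => n * m + q := by
    intro i hi
    simp only [Finset.mem_filter, Finset.mem_range] at hi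
    simp only [Finset.mem_biUnion, Finset.mem_image, Finset.mem_filter, Finset.mem_range]
    refine ⟨i % m, Nat.mod_lt _ hm, i / m, ⟨?_, ?_⟩, ?_⟩
    · have := Nat.div_le_div_right (c := m) (Nat.le_of_lt hi.1)
      omega
    · have : i / m * m + i % m = i := by rw [Nat.mul_comm]; exact Nat.div_add_mod i m
      rw [this]; exact hi.2
    · rw [Nat.mul_comm]; exact Nat.div_add_mod i m
  calc ((Finset.range N).filter P).card
      ≤ ((Finset.range m).biUnion fun q =>
          ((Finset.range (N / m + 1)).filter fun n => P (n * m + q)).image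
            fun n => n * m + q).card := Finset.card_le_card hsub
    _ ≤ ∑ q ∈ Finset.range m,
          (((Finset.range (N / m + 1)).filter fun n => P (n * m + q)).image
            fun n => n * m + q).card := Finset.card_biUnion_le
    _ ≤ ∑ q ∈ Finset.range m,
          ((Finset.range (N / m + 1)).filter fun n => P (n * m + q)).card :=
        Finset.sum_le_sum fun q _ => Finset.card_image_le
    _ ≤ (∑ q ∈ Finset.range (m - L + 1),
          ((Finset.range (N / m + 1)).filter fun n => P (n * m + q)).card)
        + (L - 1) * (N / m + 1) := by
        rw [← Finset.sum_range_add_sum_Ico _ (show m - L + 1 ≤ m by omega)]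
        gcongr
        calc (∑ q ∈ Finset.Ico (m - L + 1) m,
              ((Finset.range (N / m + 1)).filter fun n => P (n * m + q)).card)
            ≤ ∑ _q ∈ Finset.Ico (m - L + 1) m, (N / m + 1) :=
              Finset.sum_le_sum fun q _ =>
                (Finset.card_filter_le _ _).trans (by rw [Finset.card_range])
          _ = (L - 1) * (N / m + 1) := by
              rw [Finset.sum_const, Nat.card_Ico, smul_eq_mul]
              congr 1
              omega

lemma tendsto_natdiv_atTop (m : ℕ) (hm : 1 ≤ m) :
    Tendsto (fun N : ℕ => N / m) atTop atTop :=
  Filter.tendsto_atTop_atTop.2 fun b =>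
    ⟨b * m, fun n hn => (Nat.le_div_iff_mul_le (by omega)).2 hn⟩

lemma tendsto_natmul_atTop (m : ℕ) (hm : 1 ≤ m) :
    Tendsto (fun N : ℕ => N * m) atTop atTop :=
  Filter.tendsto_atTop_atTop.2 fun b =>
    ⟨b, fun n hn => hn.trans (Nat.le_mul_of_pos_right n (by omega))⟩

lemma tendsto_mod_div (m : ℕ) (hm : 1 ≤ m) :
    Tendsto (fun N : ℕ => ((N % m : ℕ) : ℝ) / N) atTop (nhds 0) := by
  refine squeeze_zero (fun N => by positivity) (g := fun N : ℕ => (m : ℝ) / N) ?_ ?_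
  · intro N
    have h : ((N % m : ℕ) : ℝ) ≤ (m : ℝ) := by
      exact_mod_cast (Nat.mod_lt N (show 0 < m by omega)).le
    rcases Nat.eq_zero_or_pos N with h0 | h0
    · simp [h0]
    · have hpos : (0 : ℝ) < N := by exact_mod_cast h0
      exact (div_le_div_iff_of_pos_right hpos).2 h
  · exact tendsto_const_div_atTop_nhds_zero_nat (m : ℝ)

lemma tendsto_floor_div (m : ℕ) (hm : 1 ≤ m) :
    Tendsto (fun N : ℕ => ((N / m : ℕ) : ℝ) / (N : ℝ)) atTop (nhds (1 / m)) := by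
  have key : ∀ᶠ N : ℕ in atTop, (1 - ((N % m : ℕ) : ℝ) / N) * (1 / m)
      = ((N / m : ℕ) : ℝ) / (N : ℝ) := by
    filter_upwards [eventually_ge_atTop 1] with N hN
    have hN0 : (N : ℝ) ≠ 0 := Nat.cast_ne_zero.2 (by omega)
    have hm0 : (m : ℝ) ≠ 0 := Nat.cast_ne_zero.2 (by omega)
    have hcast : ((N / m : ℕ) : ℝ) * m = (N : ℝ) - ((N % m : ℕ) : ℝ) := by
      have h := Nat.div_add_mod N m
      have : (m : ℝ) * ((N / m : ℕ) : ℝ) + ((N % m : ℕ) : ℝ) = (N : ℝ) := by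
        exact_mod_cast congrArg (Nat.cast : ℕ → ℝ) h
      linarith
    have h2 : ((N / m : ℕ) : ℝ) = ((N : ℝ) - ((N % m : ℕ) : ℝ)) / m := by
      rw [eq_div_iff hm0]; exact hcast
    have h3 : (1 - ((N % m : ℕ) : ℝ) / N) = ((N : ℝ) - ((N % m : ℕ) : ℝ)) / N := by
      field_simp
    rw [h3, h2, div_div, div_mul_div_comm, mul_one, mul_comm (N : ℝ) (m : ℝ)]
  apply Tendsto.congr' key
  have h1 : Tendsto (fun N : ℕ => (1 - ((N % m : ℕ) : ℝ) / N) * (1 / m)) atTop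
      (nhds ((1 - 0) * (1 / m))) :=
    (tendsto_const_nhds.sub (tendsto_mod_div m hm)).mul tendsto_const_nhds
  simpa using h1

lemma tendsto_floor_div' (m : ℕ) (hm : 1 ≤ m) :
    Tendsto (fun N : ℕ => ((N / m + 1 : ℕ) : ℝ) / (N : ℝ)) atTop (nhds (1 / m)) := by
  have h : ∀ N : ℕ, ((N / m + 1 : ℕ) : ℝ) / (N : ℝ)
      = ((N / m : ℕ) : ℝ) / N + 1 / N := by
    intro N; push_cast; ring
  simp only [h]
  simpa using (tendsto_floor_div m hm).add (tendsto_const_div_atTop_nhds_zero_nat 1)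

lemma tendsto_comp_floor (m : ℕ) (hm : 1 ≤ m) (f : ℕ → ℝ) (c : ℝ)
    (hf : Tendsto (fun K : ℕ => f K / K) atTop (nhds c)) :
    Tendsto (fun N : ℕ => f (N / m) / N) atTop (nhds (c * (1 / m))) := by
  have h1 := (hf.comp (tendsto_natdiv_atTop m hm)).mul (tendsto_floor_div m hm)
  apply Tendsto.congr' ?_ h1
  filter_upwards [eventually_ge_atTop m] with N hN
  have h2 : 1 ≤ N / m := (Nat.le_div_iff_mul_le (by omega)).2 (by omega)
  have hN0 : (N : ℝ) ≠ 0 := Nat.cast_ne_zero.2 (by omega)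
  have hK0 : ((N / m : ℕ) : ℝ) ≠ 0 := Nat.cast_ne_zero.2 (by omega)
  show f (N / m) / (N / m : ℕ) * (((N / m : ℕ) : ℝ) / N) = f (N / m) / N
  field_simp

lemma tendsto_comp_floor' (m : ℕ) (hm : 1 ≤ m) (f : ℕ → ℝ) (c : ℝ)
    (hf : Tendsto (fun K : ℕ => f K / K) atTop (nhds c)) :
    Tendsto (fun N : ℕ => f (N / m + 1) / N) atTop (nhds (c * (1 / m))) := by
  have hcomp : Tendsto (fun N : ℕ => N / m + 1) atTop atTop :=
    Filter.tendsto_atTop_atTop.2 fun b =>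
      ⟨b * m, fun n hn => le_trans ((Nat.le_div_iff_mul_le (by omega)).2 hn) (by omega)⟩
  have h1 := (hf.comp hcomp).mul (tendsto_floor_div' m hm)
  apply Tendsto.congr' ?_ h1
  filter_upwards [eventually_ge_atTop 1] with N hN
  have hN0 : (N : ℝ) ≠ 0 := Nat.cast_ne_zero.2 (by omega)
  have hK0 : ((N / m + 1 : ℕ) : ℝ) ≠ 0 := Nat.cast_ne_zero.2 (Nat.succ_ne_zero _)
  show f (N / m + 1) / (N / m + 1 : ℕ) * (((N / m + 1 : ℕ) : ℝ) / N) = f (N / m + 1) / N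
  field_simp

lemma tendsto_comp_mul (m : ℕ) (hm : 1 ≤ m) (f : ℕ → ℝ) (c : ℝ)
    (hf : Tendsto (fun K : ℕ => f K / K) atTop (nhds c)) :
    Tendsto (fun N : ℕ => f (N * m) / N) atTop (nhds (c * m)) := by
  have h1 := (hf.comp (tendsto_natmul_atTop m hm)).mul
    (tendsto_const_nhds (x := (m : ℝ)) (f := atTop (α := ℕ)))
  apply Tendsto.congr' ?_ h1
  filter_upwards [eventually_ge_atTop 1] with N hN
  have hN0 : (N : ℝ) ≠ 0 := Nat.cast_ne_zero.2 (by omega)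
  have hm0 : (m : ℝ) ≠ 0 := Nat.cast_ne_zero.2 (by omega)
  show f (N * m) / ((N * m : ℕ) : ℝ) * (m : ℝ) = f (N * m) / N
  push_cast
  rw [div_mul_eq_mul_div, div_eq_div_iff (by positivity) hN0]
  ring

lemma prod_map_ofFn (p : ℝ) {L : ℕ} (W : Fin L → Bool) :
    ((List.ofFn W).map fun a => if a then p else 1 - p).prod = mu p W := by
  rw [List.map_ofFn, List.prod_ofFn]
  rfl

lemma normal_fn {p : ℝ} {α : ℕ → Bool} (h : BernoulliNormal p α) {L : ℕ} (hL : 1 ≤ L)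
    (W : Fin L → Bool) :
    Tendsto (fun N : ℕ =>
      (((Finset.range N).filter fun i => ∀ j : Fin L, α (i + (j : ℕ)) = W j).card : ℝ) / N)
      atTop (nhds (mu p W)) := by
  have h0 := h (List.ofFn W) (by simpa using hL)
  rw [prod_map_ofFn] at h0
  apply h0.congr
  intro N
  congr 1
  norm_cast
  congr 1
  apply Finset.filter_congr
  intro i _
  constructor
  · intro hj j
    have := hj (Fin.cast (List.length_ofFn : (List.ofFn W).length = L).symm j)
    simpa [List.get_ofFn] using this
  · intro hj j
    rw [List.get_ofFn]
    simpa using hj (Fin.cast (List.length_ofFn : (List.ofFn W).length = L) j)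

-- also: normal from fn-form limits
lemma normal_of_fn {p : ℝ} {α : ℕ → Bool}
    (h : ∀ (L : ℕ), 1 ≤ L → ∀ W : Fin L → Bool,
      Tendsto (fun N : ℕ =>
        (((Finset.range N).filter fun i => ∀ j : Fin L, α (i + (j : ℕ)) = W j).card : ℝ) / N)
        atTop (nhds (mu p W))) :
    BernoulliNormal p α := by
  intro w hw
  have h0 := h w.length hw w.get
  rw [show ((w.map fun a => if a then p else 1 - p).prod) = mu p w.get from ?_]
  · exact h0
  · conv_lhs => rw [← List.ofFn_get w]
    rw [prod_map_ofFn]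

variable {p : ℝ} {α : ℕ → Bool}

lemma sum_powerset_pow {β : Type*} [DecidableEq β] (x : ℝ) (S : Finset β) :
    ∑ T ∈ S.powerset, x ^ T.card = (x + 1) ^ S.card := by
  rw [Finset.sum_powerset]
  rw [Finset.sum_congr rfl (fun j _ => Finset.sum_powersetCard j S _)]
  have h := add_pow x (1 : ℝ) S.card
  simp only [one_pow, mul_one] at h
  rw [h]
  apply Finset.sum_congr rfl
  intro j _
  rw [nsmul_eq_mul]
  ring

lemma cntOnes_tendsto (hP : PostnikovAdmissible p α) (m : ℕ) (hm : 1 ≤ m)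
    (S : Finset (Fin m)) :
    Tendsto (fun N : ℕ =>
      (((Finset.range N).filter fun n => ∀ i ∈ S, α (n * m + (i : ℕ)) = true).card : ℝ) / N)
      atTop (nhds (p ^ S.card)) := by
  rcases S.eq_empty_or_nonempty with rfl | hS
  · simp only [Finset.notMem_empty, false_implies, implies_true, Finset.filter_true,
      Finset.card_range, Finset.card_empty, pow_zero]
    apply Tendsto.congr' ?_ (tendsto_const_nhds (x := (1:ℝ)))
    filter_upwards [eventually_ge_atTop 1] with N hN
    have : (N : ℝ) ≠ 0 := Nat.cast_ne_zero.2 (by omega)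
    rw [div_self this]
  · exact hP m hm S hS

lemma stepA (hP : PostnikovAdmissible p α)
    (m s q : ℕ) (hm : 1 ≤ m) (hqs : q + s ≤ m) (v : Fin s → Bool) :
    Tendsto (fun N : ℕ =>
      (((Finset.range N).filter fun n =>
        ∀ j : Fin s, α (n * m + q + (j : ℕ)) = v j).card : ℝ) / N)
      atTop (nhds (mu p v)) := by
  classical
  have hemb : ∀ j : Fin s, q + (j : ℕ) < m := fun j => by have := j.2; omega
  set emb : Fin s → Fin m := fun j => ⟨q + j, hemb j⟩ with hembdef
  have hembinj : Function.Injective emb := by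
    intro a b hab
    have h1 : q + (a : ℕ) = q + (b : ℕ) := congrArg Fin.val hab
    exact Fin.val_injective (by omega)
  set O : Finset (Fin m) := (Finset.univ.filter fun j => v j = true).image emb with hO
  set Z : Finset (Fin m) := (Finset.univ.filter fun j => v j = false).image emb with hZ
  have hOZ : Disjoint O Z := by
    rw [Finset.disjoint_left]
    intro a ha ha'
    simp only [hO, hZ, Finset.mem_image, Finset.mem_filter] at ha ha'
    obtain ⟨j, ⟨_, hj⟩, rfl⟩ := ha
    obtain ⟨j', ⟨_, hj'⟩, he⟩ := ha'
    have := hembinj he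
    rw [this] at hj'
    rw [hj'] at hj
    exact Bool.false_ne_true (by exact_mod_cast hj)
  -- pointwise inclusion-exclusion identity
  have key : ∀ n : ℕ, (if (∀ j : Fin s, α (n * m + q + (j : ℕ)) = v j) then (1:ℝ) else 0)
      = ∑ T ∈ Z.powerset, (-1 : ℝ) ^ T.card *
          (if (∀ i ∈ O ∪ T, α (n * m + (i : ℕ)) = true) then 1 else 0) := by
    intro n
    have harith : ∀ j : Fin s, n * m + q + (j : ℕ) = n * m + ((emb j : Fin m) : ℕ) := by
      intro j; show n * m + q + (j:ℕ) = n * m + (q + (j:ℕ)); omega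
    by_cases hOall : ∀ i ∈ O, α (n * m + (i : ℕ)) = true
    · set Z1 : Finset (Fin m) := Z.filter (fun i => α (n * m + (i : ℕ)) = true) with hZ1
      have hsplit : ∀ T ∈ Z.powerset,
          ((-1 : ℝ) ^ T.card * (if (∀ i ∈ O ∪ T, α (n * m + (i : ℕ)) = true) then (1:ℝ) else 0))
            = (if T ⊆ Z1 then (-1 : ℝ) ^ T.card else 0) := by
        intro T hT
        rw [Finset.mem_powerset] at hT
        have hiff : (∀ i ∈ O ∪ T, α (n * m + (i : ℕ)) = true) ↔ T ⊆ Z1 := by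
          rw [Finset.forall_mem_union]
          constructor
          · intro ⟨_, h2⟩ i hi
            exact Finset.mem_filter.2 ⟨hT hi, h2 i hi⟩
          · intro hsub
            exact ⟨hOall, fun i hi => (Finset.mem_filter.1 (hsub hi)).2⟩
        rw [if_congr hiff rfl rfl]
        split <;> simp
      rw [Finset.sum_congr rfl hsplit, ← Finset.sum_filter]
      have hfilter : Z.powerset.filter (fun T => T ⊆ Z1) = Z1.powerset := by
        ext T
        simp only [Finset.mem_filter, Finset.mem_powerset]
        constructor
        · exact fun h => h.2
        · intro h
          exact ⟨h.trans (Finset.filter_subset _ _), h⟩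
      rw [hfilter, sum_powerset_pow (-1 : ℝ) Z1, show (-1 : ℝ) + 1 = 0 by ring, zero_pow_eq]
      have hiff2 : (∀ j : Fin s, α (n * m + q + (j : ℕ)) = v j) ↔ Z1 = ∅ := by
        constructor
        · intro hmatch
          apply Finset.eq_empty_iff_forall_notMem.2
          intro i hi
          simp only [hZ1, Finset.mem_filter] at hi
          obtain ⟨hiZ, hitrue⟩ := hi
          simp only [hZ, Finset.mem_image, Finset.mem_filter] at hiZ
          obtain ⟨j, ⟨_, hjf⟩, rfl⟩ := hiZ
          rw [← harith j] at hitrue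
          rw [hmatch j] at hitrue
          exact Bool.false_ne_true (hjf ▸ hitrue)
        · intro hempty j
          by_cases hv : v j = true
          · have hmem : emb j ∈ O := Finset.mem_image.2 ⟨j, Finset.mem_filter.2 ⟨Finset.mem_univ _, hv⟩, rfl⟩
            rw [harith j, hOall _ hmem, hv]
          · have hv' : v j = false := by simpa using hv
            have hmem : emb j ∈ Z := Finset.mem_image.2 ⟨j, Finset.mem_filter.2 ⟨Finset.mem_univ _, hv'⟩, rfl⟩
            have hnot : ¬ (α (n * m + ((emb j : Fin m) : ℕ)) = true) := by
              intro hcontra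
              have : emb j ∈ Z1 := Finset.mem_filter.2 ⟨hmem, hcontra⟩
              rw [hempty] at this
              exact Finset.notMem_empty _ this
            rw [harith j, hv']
            exact Bool.eq_false_iff.2 hnot
      rw [if_congr (hiff2.trans Finset.card_eq_zero.symm) rfl rfl]
    · have hL : ¬ (∀ j : Fin s, α (n * m + q + (j : ℕ)) = v j) := by
        intro hmatch
        apply hOall
        intro i hi
        simp only [hO, Finset.mem_image, Finset.mem_filter] at hi
        obtain ⟨j, ⟨_, hjt⟩, rfl⟩ := hi
        rw [← harith j, hmatch j, hjt]
      rw [if_neg hL]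
      symm
      apply Finset.sum_eq_zero
      intro T hT
      have : ¬ (∀ i ∈ O ∪ T, α (n * m + (i : ℕ)) = true) := by
        intro hall
        exact hOall fun i hi => hall i (Finset.mem_union_left _ hi)
      rw [if_neg this, mul_zero]
  -- counting identity
  have count : ∀ N : ℕ,
      ((((Finset.range N).filter fun n =>
        ∀ j : Fin s, α (n * m + q + (j : ℕ)) = v j).card : ℝ))
      = ∑ T ∈ Z.powerset, (-1 : ℝ) ^ T.card *
          (((Finset.range N).filter fun n => ∀ i ∈ O ∪ T, α (n * m + (i : ℕ)) = true).card : ℝ) := by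
    intro N
    rw [← Finset.sum_boole]
    rw [Finset.sum_congr rfl (fun n _ => key n), Finset.sum_comm]
    apply Finset.sum_congr rfl
    intro T _
    rw [← Finset.mul_sum, Finset.sum_boole]
  -- limit
  have hlim : Tendsto (fun N : ℕ =>
      (((Finset.range N).filter fun n =>
        ∀ j : Fin s, α (n * m + q + (j : ℕ)) = v j).card : ℝ) / N)
      atTop (nhds (∑ T ∈ Z.powerset, (-1 : ℝ) ^ T.card * p ^ (O ∪ T).card)) := by
    have : ∀ N : ℕ, (((Finset.range N).filter fun n =>
        ∀ j : Fin s, α (n * m + q + (j : ℕ)) = v j).card : ℝ) / N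
        = ∑ T ∈ Z.powerset, (-1 : ℝ) ^ T.card *
            ((((Finset.range N).filter fun n =>
              ∀ i ∈ O ∪ T, α (n * m + (i : ℕ)) = true).card : ℝ) / N) := by
      intro N
      rw [count N, Finset.sum_div]
      exact Finset.sum_congr rfl fun T _ => mul_div_assoc _ _ _
    simp only [this]
    exact tendsto_finset_sum _ fun T _ =>
      ((cntOnes_tendsto hP m hm (O ∪ T)).const_mul _)
  -- value
  have hval : (∑ T ∈ Z.powerset, (-1 : ℝ) ^ T.card * p ^ (O ∪ T).card) = mu p v := by
    have hcard : ∀ T ∈ Z.powerset, (O ∪ T).card = O.card + T.card := by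
      intro T hT
      rw [Finset.mem_powerset] at hT
      exact Finset.card_union_of_disjoint (Finset.disjoint_of_subset_right hT hOZ)
    rw [Finset.sum_congr rfl (fun T hT => by rw [hcard T hT])]
    have : ∀ T : Finset (Fin m), (-1 : ℝ) ^ T.card * p ^ (O.card + T.card)
        = p ^ O.card * (-p) ^ T.card := by
      intro T
      rw [pow_add, neg_pow]
      ring
    rw [Finset.sum_congr rfl (fun T _ => this T), ← Finset.mul_sum]
    have hbin : (∑ T ∈ Z.powerset, (-p) ^ T.card) = (1 - p) ^ Z.card := by
      rw [sum_powerset_pow (-p) Z, show -p + 1 = 1 - p by ring]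
    rw [hbin]
    -- mu p v = p ^ #O * (1-p) ^ #Z
    unfold mu
    rw [Finset.prod_ite, Finset.prod_const, Finset.prod_const]
    have c1 : (Finset.univ.filter fun j => v j = true).card = O.card := by
      rw [hO, Finset.card_image_of_injective _ hembinj]
    have c2 : (Finset.univ.filter fun j => ¬ (v j = true)).card = Z.card := by
      rw [hZ, Finset.card_image_of_injective _ hembinj]
      congr 1
      apply Finset.filter_congr
      intro j _
      simp
    rw [c1, c2]
  rw [← hval]
  exact hlim


lemma div_le_div_nat {a b : ℝ} (h : a ≤ b) (N : ℕ) : a / N ≤ b / N := by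
  rcases Nat.eq_zero_or_pos N with h0 | h0
  · simp [h0]
  · exact (div_le_div_iff_of_pos_right (by exact_mod_cast h0)).2 h

lemma fn_tendsto_of_postnikov {p : ℝ} {α : ℕ → Bool} (hp0 : 0 < p) (hp1 : p < 1)
    (hP : PostnikovAdmissible p α)
    (L : ℕ) (hL : 1 ≤ L) (W : Fin L → Bool) :
    Tendsto (fun N : ℕ =>
      (((Finset.range N).filter fun i => ∀ j : Fin L, α (i + (j : ℕ)) = W j).card : ℝ) / N)
      atTop (nhds (mu p W)) := by
  classical
  set P : ℕ → Prop := fun i => ∀ j : Fin L, α (i + (j : ℕ)) = W j with hPdef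
  rw [Metric.tendsto_nhds]
  intro ε hε
  obtain ⟨m₀, hm₀⟩ := exists_nat_gt ((8 * L : ℝ) / ε)
  set m : ℕ := max (max m₀ L) 1 with hmdef
  have hm1 : 1 ≤ m := le_max_right _ _
  have hLm : L ≤ m := le_trans (le_max_right m₀ L) (le_max_left _ _)
  have hmpos : (0 : ℝ) < m := by exact_mod_cast hm1
  have hmR : (L : ℝ) / m < ε / 8 := by
    have h1 : (8 * L : ℝ) / ε < m := lt_of_lt_of_le hm₀ (by
      exact_mod_cast le_trans (le_max_left m₀ L) (le_max_left _ _))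
    rw [div_lt_iff₀ hmpos]
    rw [div_lt_iff₀ hε] at h1
    nlinarith
  -- the aligned counts with offset q
  have hq_tendsto : ∀ q, q ≤ m - L →
      Tendsto (fun K : ℕ =>
        (((Finset.range K).filter fun n => P (n * m + q)).card : ℝ) / K)
        atTop (nhds (mu p W)) := by
    intro q hq
    exact stepA hP m L q hm1 (by omega) W
  -- lower bound sequence
  have hlow : Tendsto (fun N : ℕ => ∑ q ∈ Finset.range (m - L + 1),
      (((Finset.range (N / m)).filter fun n => P (n * m + q)).card : ℝ) / N)
      atTop (nhds (∑ _q ∈ Finset.range (m - L + 1), mu p W * (1 / m))) := by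
    apply tendsto_finset_sum
    intro q hq
    exact tendsto_comp_floor m hm1 _ _ (hq_tendsto q (by simp only [Finset.mem_range] at hq; omega))
  -- upper bound sequence
  have hup : Tendsto (fun N : ℕ => (∑ q ∈ Finset.range (m - L + 1),
      (((Finset.range (N / m + 1)).filter fun n => P (n * m + q)).card : ℝ) / N)
      + ((L : ℝ) - 1) * (((N / m + 1 : ℕ) : ℝ) / N))
      atTop (nhds ((∑ _q ∈ Finset.range (m - L + 1), mu p W * (1 / m))
        + ((L : ℝ) - 1) * (1 / m))) := by
    apply Tendsto.add
    · apply tendsto_finset_sum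
      intro q hq
      exact tendsto_comp_floor' m hm1 _ _
        (hq_tendsto q (by simp only [Finset.mem_range] at hq; omega))
    · exact (tendsto_floor_div' m hm1).const_mul _
  -- values
  set vlo : ℝ := ∑ _q ∈ Finset.range (m - L + 1), mu p W * (1 / m) with hvlo
  have hvlo_val : vlo = ((m - L + 1 : ℕ) : ℝ) * mu p W / m := by
    rw [hvlo, Finset.sum_const, Finset.card_range, nsmul_eq_mul]
    ring
  have hcast : ((m - L + 1 : ℕ) : ℝ) = (m : ℝ) - L + 1 := by
    push_cast [hLm]
    ring
  have hmu0 := mu_nonneg hp0 hp1 W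
  have hmu1 := mu_le_one hp0 hp1 W
  have hlo_close : mu p W - ε / 8 ≤ vlo := by
    rw [hvlo_val, hcast]
    rw [div_lt_iff₀ hmpos] at hmR
    have hL1 : (1 : ℝ) ≤ L := by exact_mod_cast hL
    have hLm' : (L : ℝ) ≤ m := by exact_mod_cast hLm
    rw [le_div_iff₀ hmpos]
    nlinarith
  have hup_close : vlo + ((L : ℝ) - 1) * (1 / m) ≤ mu p W + ε / 8 := by
    rw [hvlo_val, hcast]
    rw [div_lt_iff₀ hmpos] at hmR
    have hL1 : (1 : ℝ) ≤ L := by exact_mod_cast hL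
    have hLm' : (L : ℝ) ≤ m := by exact_mod_cast hLm
    rw [mul_one_div, ← add_div, div_le_iff₀ hmpos]
    nlinarith
  -- pointwise bounds
  have hlb : ∀ N : ℕ, (∑ q ∈ Finset.range (m - L + 1),
      (((Finset.range (N / m)).filter fun n => P (n * m + q)).card : ℝ) / N)
      ≤ (((Finset.range N).filter P).card : ℝ) / N := by
    intro N
    rw [← Finset.sum_div]
    apply div_le_div_nat
    exact_mod_cast sum_aligned_le P m L N hL hLm
  have hub : ∀ N : ℕ, (((Finset.range N).filter P).card : ℝ) / N
      ≤ (∑ q ∈ Finset.range (m - L + 1),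
          (((Finset.range (N / m + 1)).filter fun n => P (n * m + q)).card : ℝ) / N)
        + ((L : ℝ) - 1) * (((N / m + 1 : ℕ) : ℝ) / N) := by
    intro N
    rw [← Finset.sum_div]
    have h2 : ((L : ℝ) - 1) * (((N / m + 1 : ℕ) : ℝ) / N)
        = (((L - 1) * (N / m + 1) : ℕ) : ℝ) / N := by
      push_cast [hL]
      ring
    rw [h2, ← add_div]
    apply div_le_div_nat
    exact_mod_cast card_le_sum_aligned P m L N hL hLm
  -- combine
  have hev1 := hlow.eventually_const_lt (show vlo - ε / 8 < vlo by linarith)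
  have hev2 := hup.eventually_lt_const
    (show vlo + ((L:ℝ)-1) * (1/m) < vlo + ((L:ℝ)-1) * (1/m) + ε / 8 by linarith)
  filter_upwards [hev1, hev2] with N h1 h2
  rw [Real.dist_eq, abs_lt]
  have hl := hlb N
  have hu := hub N
  constructor
  · have : mu p W - ε / 4 < (((Finset.range N).filter P).card : ℝ) / N := by linarith
    linarith
  · have : (((Finset.range N).filter P).card : ℝ) / N < mu p W + ε / 4 := by linarith
    linarith

/-- Cauchy-Schwarz: first absolute moment bounded by second moment. -/
lemma Emu_abs_le {p : ℝ} (hp0 : 0 < p) (hp1 : p < 1) {L : ℕ} (f : (Fin L → Bool) → ℝ) :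
    (∑ W : Fin L → Bool, mu p W * |f W|) ^ 2 ≤ ∑ W : Fin L → Bool, mu p W * f W ^ 2 := by
  have hcs := Finset.sum_mul_sq_le_sq_mul_sq Finset.univ
    (fun W : Fin L → Bool => Real.sqrt (mu p W))
    (fun W : Fin L → Bool => Real.sqrt (mu p W) * |f W|)
  have h1 : ∀ W : Fin L → Bool,
      Real.sqrt (mu p W) * (Real.sqrt (mu p W) * |f W|) = mu p W * |f W| := by
    intro W
    rw [← mul_assoc, Real.mul_self_sqrt (mu_nonneg hp0 hp1 W)]
  have h2 : ∀ W : Fin L → Bool, Real.sqrt (mu p W) ^ 2 = mu p W :=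
    fun W => Real.sq_sqrt (mu_nonneg hp0 hp1 W)
  have h3 : ∀ W : Fin L → Bool,
      (Real.sqrt (mu p W) * |f W|) ^ 2 = mu p W * f W ^ 2 := by
    intro W
    rw [mul_pow, h2, sq_abs]
  rw [Finset.sum_congr rfl (fun W _ => h1 W), Finset.sum_congr rfl (fun W _ => h2 W),
    Finset.sum_congr rfl (fun W _ => h3 W), sum_mu hp0 hp1 L, one_mul] at hcs
  exact hcs

/-- Variance of the average of `T` independent indicators. -/
lemma variance_calc {p : ℝ} (hp0 : 0 < p) (hp1 : p < 1) {L k : ℕ} (T : ℕ) (hT : 1 ≤ T)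
    (St : ℕ → Finset (Fin L)) (hcard : ∀ t, t < T → (St t).card = k)
    (hdisj : ∀ s t, s < T → t < T → s ≠ t → Disjoint (St s) (St t)) :
    ∑ W : Fin L → Bool, mu p W *
      ((∑ t ∈ Finset.range T, (if (∀ i ∈ St t, W i = true) then (1:ℝ) else 0)) / T - p ^ k) ^ 2
      = (p ^ k - (p ^ k) ^ 2) / T := by
  classical
  set c : ℝ := p ^ k with hc
  set X : ℕ → (Fin L → Bool) → ℝ :=
    fun t W => if (∀ i ∈ St t, W i = true) then (1:ℝ) else 0 with hX
  have hTpos : (0:ℝ) < T := by exact_mod_cast hT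
  have hT0 : (T:ℝ) ≠ 0 := ne_of_gt hTpos
  have hsq : ∀ W : Fin L → Bool, ((∑ t ∈ Finset.range T, X t W) / T - c) ^ 2
      = (∑ s ∈ Finset.range T, ∑ t ∈ Finset.range T, ((X s W - c) * (X t W - c))) / (T:ℝ)^2 := by
    intro W
    have e1 : (∑ t ∈ Finset.range T, X t W) / T - c
        = (∑ t ∈ Finset.range T, (X t W - c)) / T := by
      rw [Finset.sum_sub_distrib, Finset.sum_const, Finset.card_range, nsmul_eq_mul]
      field_simp
    rw [e1, div_pow, sq, Finset.sum_mul_sum]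
  rw [Finset.sum_congr rfl (fun W _ => by rw [hsq W])]
  have e2 : ∀ W : Fin L → Bool, mu p W *
      ((∑ s ∈ Finset.range T, ∑ t ∈ Finset.range T, ((X s W - c) * (X t W - c))) / (T:ℝ)^2)
      = (∑ s ∈ Finset.range T, ∑ t ∈ Finset.range T, mu p W * ((X s W - c) * (X t W - c))) / (T:ℝ)^2 := by
    intro W
    rw [← mul_div_assoc]
    congr 1
    rw [Finset.mul_sum]
    exact Finset.sum_congr rfl fun s _ => by rw [Finset.mul_sum]
  rw [Finset.sum_congr rfl (fun W _ => e2 W), ← Finset.sum_div]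
  -- swap the W-sum inside
  have e3 : (∑ W : Fin L → Bool, ∑ s ∈ Finset.range T, ∑ t ∈ Finset.range T,
        mu p W * ((X s W - c) * (X t W - c)))
      = ∑ s ∈ Finset.range T, ∑ t ∈ Finset.range T, ∑ W : Fin L → Bool,
        mu p W * ((X s W - c) * (X t W - c)) := by
    rw [Finset.sum_comm]
    exact Finset.sum_congr rfl fun s _ => Finset.sum_comm
  rw [e3]
  -- compute inner expectations
  have hE : ∀ u, u < T → ∑ W : Fin L → Bool, mu p W * X u W = c := by
    intro u hu
    have h := sum_mu_ind hp0 hp1 (St u)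
    rw [hcard u hu] at h
    exact h
  have hE1 : ∑ W : Fin L → Bool, mu p W = 1 := sum_mu hp0 hp1 L
  have hXX : ∀ (t : ℕ) (W : Fin L → Bool), X t W * X t W = X t W := by
    intro t W
    simp only [hX]
    split <;> norm_num
  have hinner : ∀ s ∈ Finset.range T, ∀ t ∈ Finset.range T,
      (∑ W : Fin L → Bool, mu p W * ((X s W - c) * (X t W - c)))
        = if s = t then c - c ^ 2 else 0 := by
    intro s hs t ht
    simp only [Finset.mem_range] at hs ht
    by_cases hst : s = t
    · subst hst
      rw [if_pos rfl]
      have expand : ∀ W : Fin L → Bool, mu p W * ((X s W - c) * (X s W - c))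
          = mu p W * X s W - 2 * c * (mu p W * X s W) + c ^ 2 * mu p W := by
        intro W
        have h := hXX s W
        calc mu p W * ((X s W - c) * (X s W - c))
            = mu p W * (X s W * X s W) - 2 * c * (mu p W * X s W) + c ^ 2 * mu p W := by ring
          _ = mu p W * X s W - 2 * c * (mu p W * X s W) + c ^ 2 * mu p W := by rw [h]
      rw [Finset.sum_congr rfl (fun W _ => expand W), Finset.sum_add_distrib,
        Finset.sum_sub_distrib, ← Finset.mul_sum, ← Finset.mul_sum, hE s hs, hE1]
      ring
    · rw [if_neg hst]
      have hprod : ∀ W : Fin L → Bool, X s W * X t W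
          = if (∀ i ∈ St s ∪ St t, W i = true) then (1:ℝ) else 0 := by
        intro W
        have hiff : (∀ i ∈ St s ∪ St t, W i = true)
            ↔ ((∀ i ∈ St s, W i = true) ∧ (∀ i ∈ St t, W i = true)) :=
          Finset.forall_mem_union
        simp only [hX]
        rw [if_congr hiff rfl rfl, ite_zero_mul_ite_zero, one_mul]
      have hcardU : (St s ∪ St t).card = k + k := by
        rw [Finset.card_union_of_disjoint (hdisj s t hs ht hst), hcard s hs, hcard t ht]
      have hEU : ∑ W : Fin L → Bool, mu p W * (X s W * X t W) = c ^ 2 := by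
        rw [Finset.sum_congr rfl (fun W _ => by rw [hprod W]), sum_mu_ind hp0 hp1, hcardU,
          pow_add, hc, sq]
      have expand : ∀ W : Fin L → Bool, mu p W * ((X s W - c) * (X t W - c))
          = mu p W * (X s W * X t W) - c * (mu p W * X s W) - c * (mu p W * X t W)
            + c ^ 2 * mu p W := by
        intro W; ring
      rw [Finset.sum_congr rfl (fun W _ => expand W), Finset.sum_add_distrib,
        Finset.sum_sub_distrib, Finset.sum_sub_distrib, ← Finset.mul_sum, ← Finset.mul_sum,
        ← Finset.mul_sum, hE s hs, hE t ht, hE1, hEU]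
      ring
  rw [Finset.sum_congr rfl (fun s hs => Finset.sum_congr rfl (fun t ht => hinner s hs t ht))]
  have hdiag : (∑ s ∈ Finset.range T, ∑ t ∈ Finset.range T,
      (if s = t then c - c ^ 2 else (0:ℝ))) = T * (c - c ^ 2) := by
    have : ∀ s ∈ Finset.range T, (∑ t ∈ Finset.range T,
        (if s = t then c - c ^ 2 else (0:ℝ))) = c - c ^ 2 := by
      intro s hs
      rw [Finset.sum_ite_eq]
      exact if_pos hs
    rw [Finset.sum_congr rfl this, Finset.sum_const, Finset.card_range, nsmul_eq_mul]
  rw [hdiag]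
  field_simp

lemma shift_sum_bound (f : ℕ → ℝ) (h0 : ∀ n, 0 ≤ f n) (h1 : ∀ n, f n ≤ 1) (t N : ℕ)
    (ht : t ≤ N) :
    |(∑ n ∈ Finset.range N, f (n + t)) - ∑ n ∈ Finset.range N, f n| ≤ t := by
  have e1 : ∑ n ∈ Finset.range N, f (n + t) = ∑ n ∈ Finset.Ico t (N + t), f n := by
    rw [Finset.sum_Ico_eq_sum_range]
    simp only [Nat.add_sub_cancel]
    exact Finset.sum_congr rfl fun n _ => by rw [Nat.add_comm]
  have split1 : ∑ n ∈ Finset.Ico t (N + t), f n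
      = (∑ n ∈ Finset.Ico t N, f n) + ∑ n ∈ Finset.Ico N (N + t), f n :=
    (Finset.sum_Ico_consecutive f ht (Nat.le_add_right N t)).symm
  have split2 : ∑ n ∈ Finset.range N, f n
      = (∑ n ∈ Finset.Ico 0 t, f n) + ∑ n ∈ Finset.Ico t N, f n := by
    rw [Finset.range_eq_Ico]
    exact (Finset.sum_Ico_consecutive f (Nat.zero_le t) ht).symm
  have hb : ∀ a b : ℕ, 0 ≤ ∑ n ∈ Finset.Ico a b, f n ∧
      ∑ n ∈ Finset.Ico a b, f n ≤ ((b - a : ℕ) : ℝ) := by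
    intro a b
    constructor
    · exact Finset.sum_nonneg fun n _ => h0 n
    · have := Finset.sum_le_card_nsmul (Finset.Ico a b) f 1 fun n _ => h1 n
      rwa [Nat.card_Ico, nsmul_eq_mul, mul_one] at this
  obtain ⟨b1, b2⟩ := hb N (N + t)
  obtain ⟨b3, b4⟩ := hb 0 t
  rw [e1, split1, split2, abs_le]
  have c2 : ((N + t - N : ℕ) : ℝ) = t := by rw [show N + t - N = t by omega]
  have c4 : ((t - 0 : ℕ) : ℝ) = t := by rw [show t - 0 = t by omega]
  rw [c2] at b2
  rw [c4] at b4
  constructor <;> linarith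

lemma postnikov_of_normal {p : ℝ} {α : ℕ → Bool} (hp0 : 0 < p) (hp1 : p < 1)
    (h : BernoulliNormal p α) : PostnikovAdmissible p α := by
  intro m hm R hR
  classical
  rw [Metric.tendsto_nhds]
  intro ε hε
  set k := R.card with hk
  set c : ℝ := p ^ k with hc
  have hc0 : 0 < c := pow_pos hp0 k
  have hc1 : c ≤ 1 := pow_le_one₀ hp0.le hp1.le
  obtain ⟨T₀, hT₀⟩ := exists_nat_gt ((m : ℝ) ^ 2 / ε ^ 2)
  set T : ℕ := T₀ + 1 with hTdef
  have hT1 : 1 ≤ T := by omega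
  have hTpos : (0:ℝ) < T := by exact_mod_cast hT1
  set L : ℕ := T * m with hLdef
  have hL1 : 1 ≤ L := by
    have := Nat.mul_le_mul hT1 hm
    simpa using this
  have hposlt : ∀ (t : ℕ) (i : Fin m), t % T * m + (i : ℕ) < L := by
    intro t i
    have h1 : t % T < T := Nat.mod_lt _ (by omega)
    have h2 := i.2
    calc t % T * m + (i : ℕ) < t % T * m + m := by omega
      _ = (t % T + 1) * m := by ring
      _ ≤ T * m := Nat.mul_le_mul_right m (by omega)
  set pos : ℕ → Fin m → Fin L := fun t i => ⟨t % T * m + i, hposlt t i⟩ with hpos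
  have hposinj : ∀ t, Function.Injective (pos t) := by
    intro t a b hab
    have hv := congrArg Fin.val hab
    simp only [hpos] at hv
    exact Fin.val_injective (by omega)
  set St : ℕ → Finset (Fin L) := fun t => R.image (pos t) with hSt
  have hcardSt : ∀ t, t < T → (St t).card = k :=
    fun t _ => Finset.card_image_of_injective _ (hposinj t)
  have hdisjSt : ∀ s t, s < T → t < T → s ≠ t → Disjoint (St s) (St t) := by
    intro s t hs ht hst
    rw [Finset.disjoint_left]
    intro a ha ha'
    simp only [hSt, Finset.mem_image] at ha ha'
    obtain ⟨i, _, rfl⟩ := ha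
    obtain ⟨i', _, he⟩ := ha'
    have hv := congrArg Fin.val he
    simp only [hpos] at hv
    have e1 : s % T = s := Nat.mod_eq_of_lt hs
    have e2 : t % T = t := Nat.mod_eq_of_lt ht
    rw [e1, e2] at hv
    have hi := i.2
    have hi' := i'.2
    rcases Nat.lt_or_ge s t with hlt | hge
    · nlinarith [hv, hi, hi']
    · have hgt : t < s := by omega
      nlinarith [hv, hi, hi']
  set X : ℕ → (Fin L → Bool) → ℝ :=
    fun t W => if (∀ i ∈ St t, W i = true) then (1:ℝ) else 0 with hX
  set G : (Fin L → Bool) → ℝ := fun W => (∑ t ∈ Finset.range T, X t W) / T with hG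
  set H : (Fin L → Bool) → ℝ := fun W => |G W - c| with hH
  have hH0 : ∀ W, 0 ≤ H W := fun W => abs_nonneg _
  set ind : ℕ → ℝ :=
    fun n' => if (∀ i ∈ R, α (n' * m + (i : ℕ)) = true) then (1:ℝ) else 0 with hind
  set win : ℕ → (Fin L → Bool) := fun n => fun j => α (n * m + (j : ℕ)) with hwin
  have hind0 : ∀ n, 0 ≤ ind n := fun n => by rw [hind]; dsimp only; split <;> norm_num
  have hind1 : ∀ n, ind n ≤ 1 := fun n => by rw [hind]; dsimp only; split <;> norm_num
  have hXwin : ∀ (t : ℕ), t < T → ∀ n, X t (win n) = ind (n + t) := by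
    intro t ht n
    rw [hX, hind]
    dsimp only
    apply if_congr ?_ rfl rfl
    rw [hSt]
    dsimp only
    rw [Finset.forall_mem_image]
    apply forall_congr'
    intro i
    apply imp_congr Iff.rfl
    have harith : n * m + ((pos t i : Fin L) : ℕ) = (n + t) * m + (i : ℕ) := by
      simp only [hpos]
      rw [Nat.mod_eq_of_lt ht]
      ring
    rw [hwin]
    dsimp only
    rw [harith]
  have hGwin : ∀ n, G (win n) = (∑ t ∈ Finset.range T, ind (n + t)) / T := by
    intro n
    rw [hG]
    dsimp only
    congr 1
    exact Finset.sum_congr rfl fun t ht => hXwin t (Finset.mem_range.1 ht) n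
  set B : ℕ → ℕ :=
    fun N => ((Finset.range N).filter fun n => ∀ i ∈ R, α (n * m + (i : ℕ)) = true).card with hB
  have hBsum : ∀ N, (B N : ℝ) = ∑ n ∈ Finset.range N, ind n := by
    intro N
    rw [hB, hind]
    dsimp only
    rw [Finset.sum_boole]
  set occ : (Fin L → Bool) → ℕ → ℕ :=
    fun W NN => ((Finset.range NN).filter fun i => ∀ j : Fin L, α (i + (j : ℕ)) = W j).card
    with hocc
  set A : (Fin L → Bool) → ℕ → ℕ :=
    fun W N => ((Finset.range N).filter fun n => win n = W).card with hA
  have hfiber : ∀ N, (∑ n ∈ Finset.range N, H (win n))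
      = ∑ W : Fin L → Bool, H W * (A W N : ℝ) := by
    intro N
    rw [← Finset.sum_fiberwise (Finset.range N) win (fun n => H (win n))]
    apply Finset.sum_congr rfl
    intro W _
    have hcongr : ∀ n ∈ (Finset.range N).filter (fun n => win n = W), H (win n) = H W :=
      fun n hn => by rw [(Finset.mem_filter.1 hn).2]
    rw [Finset.sum_congr rfl hcongr, Finset.sum_const, nsmul_eq_mul, mul_comm]
  have hA_le_occ : ∀ W N, (A W N : ℝ) ≤ (occ W (N * m) : ℝ) := by
    intro W N
    have hle : A W N ≤ occ W (N * m) := by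
      rw [hA, hocc]
      dsimp only
      have hcongr : ((Finset.range N).filter fun n => win n = W)
          = ((Finset.range N).filter fun n =>
              (fun i => ∀ j : Fin L, α (i + (j : ℕ)) = W j) (n * m + 0)) := by
        apply Finset.filter_congr
        intro n _
        rw [hwin]
        dsimp only
        rw [funext_iff]
        constructor
        · intro hf j
          rw [Nat.add_zero]
          exact hf j
        · intro hf j
          have := hf j
          rwa [Nat.add_zero] at this
      rw [hcongr]
      exact card_aligned_le (fun i => ∀ j : Fin L, α (i + (j : ℕ)) = W j) m N 0 (by omega)
    exact_mod_cast hle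
  -- main pointwise estimate
  have key : ∀ N : ℕ, T ≤ N → |(B N : ℝ) / N - c|
      ≤ (T : ℝ) / N + ∑ W : Fin L → Bool, H W * ((occ W (N * m) : ℝ) / N) := by
    intro N hTN
    have hN1 : 1 ≤ N := le_trans hT1 hTN
    have hNpos : (0:ℝ) < N := by exact_mod_cast hN1
    have step1 : |(B N : ℝ) - (∑ n ∈ Finset.range N, G (win n))| ≤ T := by
      have hGsum : (∑ n ∈ Finset.range N, G (win n))
          = (∑ t ∈ Finset.range T, ∑ n ∈ Finset.range N, ind (n + t)) / T := by
        rw [Finset.sum_congr rfl (fun n _ => hGwin n), ← Finset.sum_div]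
        congr 1
        exact Finset.sum_comm
      rw [hBsum, hGsum]
      have e : (∑ n ∈ Finset.range N, ind n)
          - (∑ t ∈ Finset.range T, ∑ n ∈ Finset.range N, ind (n + t)) / T
          = (∑ t ∈ Finset.range T,
              ((∑ n ∈ Finset.range N, ind n) - ∑ n ∈ Finset.range N, ind (n + t))) / T := by
        rw [Finset.sum_sub_distrib, Finset.sum_const, Finset.card_range, sub_div]
        congr 1
        rw [nsmul_eq_mul, mul_comm, mul_div_assoc, div_self (ne_of_gt hTpos), mul_one]
      rw [e, abs_div, abs_of_pos hTpos, div_le_iff₀ hTpos]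
      calc |∑ t ∈ Finset.range T,
            ((∑ n ∈ Finset.range N, ind n) - ∑ n ∈ Finset.range N, ind (n + t))|
          ≤ ∑ t ∈ Finset.range T,
            |(∑ n ∈ Finset.range N, ind n) - ∑ n ∈ Finset.range N, ind (n + t)| :=
            Finset.abs_sum_le_sum_abs _ _
        _ ≤ ∑ _t ∈ Finset.range T, (T : ℝ) := by
            apply Finset.sum_le_sum
            intro t htt
            have ht' : t ≤ N := le_trans (Nat.le_of_lt (Finset.mem_range.1 htt)) hTN
            have hs := shift_sum_bound ind hind0 hind1 t N ht'
            rw [abs_sub_comm] at hs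
            exact hs.trans (by exact_mod_cast Nat.le_of_lt (Finset.mem_range.1 htt))
        _ = (T : ℝ) * T := by rw [Finset.sum_const, Finset.card_range, nsmul_eq_mul]
    have step2 : |(∑ n ∈ Finset.range N, G (win n)) - N * c|
        ≤ ∑ W : Fin L → Bool, H W * (A W N : ℝ) := by
      have e : (∑ n ∈ Finset.range N, G (win n)) - N * c
          = ∑ n ∈ Finset.range N, (G (win n) - c) := by
        rw [Finset.sum_sub_distrib, Finset.sum_const, Finset.card_range, nsmul_eq_mul]
      rw [e]
      apply le_trans (Finset.abs_sum_le_sum_abs _ _)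
      exact le_of_eq (hfiber N)
    have step3 : (∑ W : Fin L → Bool, H W * (A W N : ℝ))
        ≤ ∑ W : Fin L → Bool, H W * (occ W (N * m) : ℝ) :=
      Finset.sum_le_sum fun W _ => mul_le_mul_of_nonneg_left (hA_le_occ W N) (hH0 W)
    have tri : |(B N : ℝ) - N * c| ≤ (T : ℝ) + ∑ W : Fin L → Bool, H W * (occ W (N * m) : ℝ) := by
      calc |(B N : ℝ) - N * c|
          ≤ |(B N : ℝ) - (∑ n ∈ Finset.range N, G (win n))|
            + |(∑ n ∈ Finset.range N, G (win n)) - N * c| :=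
            abs_sub_le _ _ _
        _ ≤ (T : ℝ) + ∑ W : Fin L → Bool, H W * (occ W (N * m) : ℝ) :=
            add_le_add step1 (step2.trans step3)
    have e2 : (B N : ℝ) / N - c = ((B N : ℝ) - N * c) / N := by
      field_simp
    rw [e2, abs_div, abs_of_pos hNpos]
    apply le_trans (div_le_div_nat tri N)
    rw [add_div, Finset.sum_div]
    apply le_of_eq
    congr 1
    exact Finset.sum_congr rfl fun W _ => mul_div_assoc _ _ _
  -- limit of the right-hand side
  have hRHS : Tendsto (fun N : ℕ =>
      (T : ℝ) / N + ∑ W : Fin L → Bool, H W * ((occ W (N * m) : ℝ) / N)) atTop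
      (nhds (0 + ∑ W : Fin L → Bool, H W * (mu p W * m))) := by
    apply Tendsto.add (tendsto_const_div_atTop_nhds_zero_nat (T : ℝ))
    apply tendsto_finset_sum
    intro W _
    exact ((tendsto_comp_mul m hm (fun K => (occ W K : ℝ)) (mu p W)
      (normal_fn h hL1 W))).const_mul _
  -- the limit value is < ε
  have hval : 0 + ∑ W : Fin L → Bool, H W * (mu p W * m) < ε := by
    rw [zero_add]
    set S : ℝ := ∑ W : Fin L → Bool, mu p W * H W with hS
    have hS0 : 0 ≤ S :=
      Finset.sum_nonneg fun W _ => mul_nonneg (mu_nonneg hp0 hp1 W) (hH0 W)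
    have hrw : (∑ W : Fin L → Bool, H W * (mu p W * m)) = (m : ℝ) * S := by
      rw [hS, Finset.mul_sum]
      exact Finset.sum_congr rfl fun W _ => by ring
    rw [hrw]
    have hvar := variance_calc hp0 hp1 T hT1 St hcardSt hdisjSt
    have hcs := Emu_abs_le hp0 hp1 (fun W => G W - c)
    have hS2 : S ^ 2 ≤ (c - c ^ 2) / T := by
      calc S ^ 2 ≤ ∑ W : Fin L → Bool, mu p W * (G W - c) ^ 2 := hcs
        _ = (c - c ^ 2) / T := hvar
    have hquarter : c - c ^ 2 ≤ 1 / 4 := by nlinarith [sq_nonneg (c - 1 / 2)]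
    have hTbig : (m : ℝ) ^ 2 / ε ^ 2 < T := by
      have : (T₀ : ℝ) ≤ T := by exact_mod_cast Nat.le_succ T₀
      linarith
    have hm2 : (m : ℝ) ^ 2 < T * ε ^ 2 := by
      rw [div_lt_iff₀ (by positivity)] at hTbig
      linarith
    have hfinal : ((m : ℝ) * S) ^ 2 < ε ^ 2 := by
      have h1 : ((m : ℝ) * S) ^ 2 = (m : ℝ) ^ 2 * S ^ 2 := by ring
      have h2 : (m : ℝ) ^ 2 * S ^ 2 ≤ (m : ℝ) ^ 2 * ((c - c ^ 2) / T) := by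
        apply mul_le_mul_of_nonneg_left hS2 (by positivity)
      have h3 : (m : ℝ) ^ 2 * ((c - c ^ 2) / T) ≤ (m : ℝ) ^ 2 * ((1 / 4) / T) := by
        gcongr
      have h4 : (m : ℝ) ^ 2 * ((1 / 4) / T) < ε ^ 2 := by
        rw [show (m : ℝ) ^ 2 * ((1 / 4) / T) = ((m : ℝ) ^ 2 / 4) / T by ring,
          div_lt_iff₀ hTpos]
        nlinarith
      calc ((m : ℝ) * S) ^ 2 = (m : ℝ) ^ 2 * S ^ 2 := h1
        _ ≤ (m : ℝ) ^ 2 * ((c - c ^ 2) / T) := h2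
        _ ≤ (m : ℝ) ^ 2 * ((1 / 4) / T) := h3
        _ < ε ^ 2 := h4
    exact lt_of_pow_lt_pow_left₀ 2 hε.le hfinal
  filter_upwards [hRHS.eventually_lt_const hval, eventually_ge_atTop T] with N h1 h2
  rw [Real.dist_eq]
  exact lt_of_le_of_lt (key N h2) h1

lemma normal_of_postnikov (hp0 : 0 < p) (hp1 : p < 1) (hP : PostnikovAdmissible p α) :
    BernoulliNormal p α :=
  normal_of_fn fun L hL W => fn_tendsto_of_postnikov hp0 hp1 hP L hL W

end BNPA

/-- A sequence `α ∈ {0,1}^ω` is Bernoulli-normal if and only if it is Postnikov-admissible. -/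
theorem bernoulliNormal_iff_postnikovAdmissible
    (p : ℝ) (hp0 : 0 < p) (hp1 : p < 1) (α : ℕ → Bool) :
    BernoulliNormal p α ↔ PostnikovAdmissible p α :=
  ⟨fun h => BNPA.postnikov_of_normal hp0 hp1 h,
   fun h => BNPA.normal_of_postnikov hp0 hp1 h⟩
end

section
/- A sequence α ∈ {0,1}^ω is Bernoulli-normal if and only if it is a Postnikova-kollektiv. -/
open Filter

/-- The limiting frequency of `1` (i.e. `true`) in the sequence `β` exists and equals `p`. -/
def Freq1 (β : ℕ → Bool) (p : ℝ) : Prop :=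
  Tendsto (fun N : ℕ =>
    (((Finset.range N).filter fun j => β j = true).card : ℝ) / N) atTop (nhds p)

/-- `w` occurs as a factor of `α` starting at position `i`. -/
def OccursAt (α : ℕ → Bool) (w : List Bool) (i : ℕ) : Prop :=
  ∀ j : Fin w.length, α (i + (j : ℕ)) = w.get j

/-- `α` is a Postnikova-kollektiv: (1) the limiting frequency of ones in `α` is `p`, and
(2) for every nonempty finite word `w`, `w` occurs infinitely often as a factor of `α`, and the
subsequence of symbols immediately following each occurrence of `w` (in order) has limiting
frequency of ones equal to `p`. -/
def PostnikovaKollektiv (p : ℝ) (α : ℕ → Bool) : Prop :=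
  Freq1 α p ∧
  ∀ w : List Bool, 1 ≤ w.length →
    {i : ℕ | OccursAt α w i}.Infinite ∧
    Freq1 (fun n => α (Nat.nth (OccursAt α w) n + w.length)) p

open Finset

instance (α : ℕ → Bool) (w : List Bool) : DecidablePred (OccursAt α w) :=
  fun i => inferInstanceAs (Decidable (∀ j : Fin w.length, α (i + (j : ℕ)) = w.get j))

lemma occursAt_append (α : ℕ → Bool) (w : List Bool) (b : Bool) (i : ℕ) :
    OccursAt α (w ++ [b]) i ↔ OccursAt α w i ∧ α (i + w.length) = b := by
  constructor
  · intro h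
    refine ⟨fun j => ?_, ?_⟩
    · have hj : (j : ℕ) < (w ++ [b]).length := by simp
      have := h ⟨j.1, hj⟩
      simpa [OccursAt, List.get_eq_getElem, List.getElem_append_left j.2] using this
    · have hl : w.length < (w ++ [b]).length := by simp
      have := h ⟨w.length, hl⟩
      simpa [List.get_eq_getElem, List.getElem_concat_length] using this
  · rintro ⟨h1, h2⟩ j
    have hj2 : (j : ℕ) < w.length + 1 := by have := j.2; simpa using this
    rcases lt_or_ge (j : ℕ) w.length with hj | hj
    · have := h1 ⟨j.1, hj⟩
      simp only [OccursAt, List.get_eq_getElem] at this ⊢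
      rw [List.getElem_append_left hj]
      exact this
    · have hje : (j : ℕ) = w.length := by omega
      simp only [List.get_eq_getElem]
      rw [List.getElem_concat_length hje, hje, h2]

lemma occursAt_singleton (α : ℕ → Bool) (b : Bool) (i : ℕ) :
    OccursAt α [b] i ↔ α i = b := by
  constructor
  · intro h
    have := h ⟨0, by simp⟩
    simpa using this
  · intro h j
    have hj : (j : ℕ) = 0 := by
      have h2 := j.2
      simp only [List.length_singleton] at h2
      omega
    simp [OccursAt, List.get_eq_getElem, hj, h]

lemma card_filter_congr' {P Q : ℕ → Prop} [DecidablePred P] [DecidablePred Q]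
    (h : ∀ i, P i ↔ Q i) (s : Finset ℕ) : (s.filter P).card = (s.filter Q).card := by
  congr 1
  exact Finset.filter_congr fun x _ => by simp [h x]

lemma card_filter_range_count (S Q : ℕ → Prop) [DecidablePred S] [DecidablePred Q]
    (hS : (setOf S).Infinite) (M : ℕ) :
    ((range M).filter fun i => S i ∧ Q i).card
      = ((range (Nat.count S M)).filter fun n => Q (Nat.nth S n)).card := by
  refine Finset.card_bij (fun n _ => Nat.nth S n) ?_ ?_ ?_ |>.symm
  · intro n hn
    simp only [mem_filter, mem_range] at hn ⊢
    exact ⟨(Nat.lt_nth_iff_count_lt hS).mp hn.1, Nat.nth_mem_of_infinite hS n, hn.2⟩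
  · intro n₁ h₁ n₂ h₂ h
    exact (Nat.nth_strictMono hS).injective h
  · intro i hi
    simp only [mem_filter, mem_range] at hi
    refine ⟨Nat.count S i, ?_, ?_⟩
    · simp only [mem_filter, mem_range]
      refine ⟨?_, by rw [Nat.nth_count hi.2.1]; exact hi.2.2⟩
      exact lt_of_lt_of_le (Nat.count_strict_mono hi.2.1 hi.1) le_rfl
    · exact Nat.nth_count hi.2.1

lemma count_eq_card (S : ℕ → Prop) [DecidablePred S] (M : ℕ) :
    Nat.count S M = ((range M).filter S).card :=
  Nat.count_eq_card_filter_range S M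

lemma tendsto_count_atTop {S : ℕ → Prop} [DecidablePred S] (hS : (setOf S).Infinite) :
    Tendsto (fun M => Nat.count S M) atTop atTop := by
  refine tendsto_atTop_atTop_of_monotone (Nat.count_monotone S) fun b => ?_
  refine ⟨Nat.nth S b + 1, ?_⟩
  rw [Nat.count_succ, Nat.count_nth_of_infinite hS, if_pos (Nat.nth_mem_of_infinite hS b)]
  omega

lemma infinite_of_tendsto_pos {S : ℕ → Prop} [DecidablePred S] {c : ℝ} (hc : 0 < c)
    (h : Tendsto (fun N : ℕ => (((range N).filter S).card : ℝ) / N) atTop (nhds c)) :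
    (setOf S).Infinite := by
  by_contra hfin
  rw [Set.not_infinite] at hfin
  have h0 : Tendsto (fun N : ℕ => (((range N).filter S).card : ℝ) / N) atTop (nhds 0) := by
    apply squeeze_zero (fun N => by positivity)
      (g := fun N : ℕ => (hfin.toFinset.card : ℝ) / N)
    · intro N
      rcases Nat.eq_zero_or_pos N with rfl | hN
      · simp
      · have hle : ((range N).filter S).card ≤ hfin.toFinset.card :=
          Finset.card_le_card fun x hx => by rw [Set.Finite.mem_toFinset]; exact (mem_filter.mp hx).2
        have hN' : (0:ℝ) < N := by exact_mod_cast hN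
        exact (div_le_div_iff_of_pos_right hN').mpr (by exact_mod_cast hle)
    · exact tendsto_const_div_atTop_nhds_zero_nat _
  have := tendsto_nhds_unique h h0; linarith

lemma tendsto_ratio {f g : ℕ → ℕ} {a b : ℝ} (hb : 0 < b)
    (hf : Tendsto (fun N : ℕ => (f N : ℝ) / N) atTop (nhds a))
    (hg : Tendsto (fun N : ℕ => (g N : ℝ) / N) atTop (nhds b)) :
    Tendsto (fun N : ℕ => (f N : ℝ) / g N) atTop (nhds (a / b)) := by
  have h := hf.div hg hb.ne'
  refine Tendsto.congr' ?_ h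
  have hev : ∀ᶠ N : ℕ in atTop, 0 < (g N : ℝ) / N :=
    hg.eventually (eventually_gt_nhds hb)
  filter_upwards [hev, eventually_gt_atTop 0] with N h1 h2
  have hN : (N : ℝ) ≠ 0 := by positivity
  have hgN : (g N : ℝ) ≠ 0 := by
    intro h0; rw [h0] at h1; simp at h1
  simp only [Pi.div_apply]
  field_simp

lemma tendsto_natCast_div_self : Tendsto (fun N : ℕ => (N : ℝ) / N) atTop (nhds 1) := by
  refine Tendsto.congr' ?_ tendsto_const_nhds
  filter_upwards [eventually_gt_atTop 0] with N hN
  have : (N : ℝ) ≠ 0 := by positivity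
  rw [div_self this]

lemma tendsto_sub_count {A B : ℕ → ℕ} {a b : ℝ} (hle : ∀ N, B N ≤ A N)
    (hA : Tendsto (fun N : ℕ => (A N : ℝ) / N) atTop (nhds a))
    (hB : Tendsto (fun N : ℕ => (B N : ℝ) / N) atTop (nhds b)) :
    Tendsto (fun N : ℕ => ((A N - B N : ℕ) : ℝ) / N) atTop (nhds (a - b)) := by
  refine Tendsto.congr (fun N => ?_) (hA.sub hB)
  rw [Nat.cast_sub (hle N), sub_div]

/-- Key lemma: from the occurrence frequency of `v` and the frequency of successes along the
subsequence following occurrences of `v`, deduce the frequency of `v` extended. -/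
lemma tendsto_mul_of_subseq {S Q : ℕ → Prop} [DecidablePred S] [DecidablePred Q]
    (hS : (setOf S).Infinite) {c q : ℝ}
    (hc : Tendsto (fun M : ℕ => (((range M).filter S).card : ℝ) / M) atTop (nhds c))
    (hq : Tendsto (fun N : ℕ =>
      (((range N).filter fun n => Q (Nat.nth S n)).card : ℝ) / N) atTop (nhds q)) :
    Tendsto (fun M : ℕ =>
      (((range M).filter fun i => S i ∧ Q i).card : ℝ) / M) atTop (nhds (c * q)) := by
  have hcomp : Tendsto (fun M : ℕ =>
      (((range (Nat.count S M)).filter fun n => Q (Nat.nth S n)).card : ℝ) / (Nat.count S M))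
      atTop (nhds q) := hq.comp (tendsto_count_atTop hS)
  have hmul := hcomp.mul hc
  rw [mul_comm q c] at hmul
  refine Tendsto.congr' ?_ hmul
  filter_upwards [(tendsto_count_atTop hS).eventually_ge_atTop 1] with M h1
  rw [card_filter_range_count S Q hS M]
  have hcnt : (Nat.count S M : ℝ) = ((range M).filter S).card := by
    exact_mod_cast congrArg Nat.cast (count_eq_card S M)
  have hne : (Nat.count S M : ℝ) ≠ 0 := by
    have : (0:ℕ) < Nat.count S M := h1
    positivity
  rw [← hcnt]
  rcases Nat.eq_zero_or_pos M with rfl | hM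
  · simp at h1
  · have hMne : (M : ℝ) ≠ 0 := by positivity
    field_simp

/-- Splitting occurrences of `w` according to the following symbol. -/
lemma count_split (α : ℕ → Bool) (w : List Bool) (M : ℕ) :
    ((range M).filter (OccursAt α (w ++ [true]))).card
      + ((range M).filter (OccursAt α (w ++ [false]))).card
      = ((range M).filter (OccursAt α w)).card := by
  classical
  have h := Finset.card_filter_add_card_filter_not
    (s := (range M).filter (OccursAt α w)) ( fun i => α (i + w.length) = true)
  have e1 : ((range M).filter (OccursAt α (w ++ [true]))).card
      = (((range M).filter (OccursAt α w)).filter fun i => α (i + w.length) = true).card := by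
    rw [Finset.filter_filter]
    exact card_filter_congr' (fun i => occursAt_append α w true i) _
  have e2 : ((range M).filter (OccursAt α (w ++ [false]))).card
      = (((range M).filter (OccursAt α w)).filter fun i => ¬ (α (i + w.length) = true)).card := by
    rw [Finset.filter_filter]
    refine card_filter_congr' (fun i => ?_) _
    rw [occursAt_append]
    simp
  rw [e1, e2, h]

lemma mu_pos {p : ℝ} (hp0 : 0 < p) (hp1 : p < 1) (w : List Bool) :
    0 < (w.map fun a => if a then p else 1 - p).prod := by
  apply List.prod_pos
  intro x hx
  rcases List.mem_map.mp hx with ⟨a, _, rfl⟩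
  cases a <;> simp <;> linarith

/-- A sequence `α ∈ {0,1}^ω` is Bernoulli-normal if and only if it is a Postnikova-kollektiv. -/
theorem bernoulliNormal_iff_postnikovaKollektiv
    (p : ℝ) (hp0 : 0 < p) (hp1 : p < 1) (α : ℕ → Bool) :
    BernoulliNormal p α ↔ PostnikovaKollektiv p α := by
  classical
  -- restate BernoulliNormal in terms of OccursAt
  have hBN_iff : BernoulliNormal p α ↔ ∀ w : List Bool, 1 ≤ w.length →
      Tendsto (fun N : ℕ => (((range N).filter (OccursAt α w)).card : ℝ) / N)
        atTop (nhds ((w.map fun a => if a then p else 1 - p).prod)) := by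
    constructor <;> intro h w hw <;> exact h w hw
  rw [hBN_iff]
  constructor
  · -- Bernoulli-normal → Postnikova-kollektiv
    intro hBN
    constructor
    · -- Freq1 α p
      have h := hBN [true] (by simp)
      have hprod : (([true] : List Bool).map fun a => if a then p else 1 - p).prod = p := by
        simp
      rw [hprod] at h
      unfold Freq1
      refine Tendsto.congr (fun N => ?_) h
      rw [card_filter_congr' (fun i => occursAt_singleton α true i) (range N)]
    · intro w hw
      set S := OccursAt α w with hS
      set μw := (w.map fun a => if a then p else 1 - p).prod with hμw
      have hμpos : 0 < μw := mu_pos hp0 hp1 w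
      have hw' := hBN w hw
      have hinf : (setOf S).Infinite := infinite_of_tendsto_pos hμpos hw'
      refine ⟨hinf, ?_⟩
      -- frequency along the subsequence
      have ht := hBN (w ++ [true]) (by simp)
      have hμt : ((w ++ [true]).map fun a => if a then p else 1 - p).prod = μw * p := by
        simp [hμw]
      rw [hμt] at ht
      have hratio := tendsto_ratio
        (f := fun M => ((range M).filter (OccursAt α (w ++ [true]))).card)
        (g := fun M => ((range M).filter S).card) hμpos ht hw'
      have hcomp := hratio.comp ((Nat.nth_strictMono hinf).tendsto_atTop)
      have hμp : μw * p / μw = p := by field_simp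
      rw [hμp] at hcomp
      unfold Freq1
      refine Tendsto.congr (fun N => ?_) hcomp
      simp only [Function.comp]
      have hden : ((range (Nat.nth S N)).filter S).card = N := by
        rw [← count_eq_card]
        exact Nat.count_nth_of_infinite hinf N
      have hnum : ((range (Nat.nth S N)).filter (OccursAt α (w ++ [true]))).card
          = ((range N).filter fun n => α (Nat.nth S n + w.length) = true).card := by
        rw [card_filter_congr' (fun i => occursAt_append α w true i) _]
        have h2 := card_filter_range_count S (fun i => α (i + w.length) = true) hinf
          (Nat.nth S N)
        rw [Nat.count_nth_of_infinite hinf] at h2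
        exact h2
      rw [hnum, hden]
  · -- Postnikova-kollektiv → Bernoulli-normal
    rintro ⟨hfreq, hPK⟩
    intro w hw
    induction w using List.reverseRecOn with
    | nil => simp at hw
    | append_singleton v b ih =>
      rcases List.eq_nil_or_concat' v with rfl | hne
      · -- base case: single letter
        simp only [List.nil_append]
        cases b
        · -- [false]
          have hT : Tendsto (fun N : ℕ =>
              (((range N).filter fun j => α j = true).card : ℝ) / N) atTop (nhds p) := hfreq
          have hle : ∀ N : ℕ, ((range N).filter fun j => α j = true).card ≤ N := fun N => by
            simpa using Finset.card_filter_le (range N) _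
          have hsplit : ∀ N : ℕ, ((range N).filter (OccursAt α [false])).card
              = N - ((range N).filter fun j => α j = true).card := by
            intro N
            have h := Finset.card_filter_add_card_filter_not
              (s := range N) ( fun j => α j = true)
            rw [Finset.card_range] at h
            have h2 : ((range N).filter (OccursAt α [false])).card
                = ((range N).filter fun j => ¬ (α j = true)).card :=
              card_filter_congr' (fun i => by simp [occursAt_singleton]) _
            omega
          have hprod : (([false] : List Bool).map fun a => if a then p else 1 - p).prod
              = 1 - p := by simp
          rw [hprod]
          have hsub := tendsto_sub_count (A := fun N => N)
            (B := fun N => ((range N).filter fun j => α j = true).card) hle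
            tendsto_natCast_div_self hT
          refine Tendsto.congr (fun N => ?_) hsub
          rw [hsplit N]
        · -- [true]
          have hprod : (([true] : List Bool).map fun a => if a then p else 1 - p).prod
              = p := by simp
          rw [hprod]
          refine Tendsto.congr (fun N => ?_) hfreq
          rw [card_filter_congr' (fun i => (occursAt_singleton α true i).symm) (range N)]
      · obtain ⟨_, _, hvne⟩ := hne
        have hv : 1 ≤ v.length := by
          cases v
          · simp at hvne
          · simp
        have ihv := ih hv
        have hμv : 0 < (v.map fun a => if a then p else 1 - p).prod := mu_pos hp0 hp1 v
        obtain ⟨hinf, hfr⟩ := hPK v hv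
        have hfr' : Tendsto (fun N : ℕ =>
            (((range N).filter fun n =>
              α (Nat.nth (OccursAt α v) n + v.length) = true).card : ℝ)
            / N) atTop (nhds p) := hfr
        have hTrue : Tendsto (fun M : ℕ =>
            (((range M).filter (OccursAt α (v ++ [true]))).card : ℝ) / M) atTop
            (nhds ((v.map fun a => if a then p else 1 - p).prod * p)) := by
          have h := tendsto_mul_of_subseq (S := OccursAt α v)
            (Q := fun i => α (i + v.length) = true) hinf ihv hfr'
          refine Tendsto.congr (fun M => ?_) h
          have hcard := card_filter_congr'
            (P := fun i => OccursAt α v i ∧ α (i + v.length) = true)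
            (Q := OccursAt α (v ++ [true]))
            (fun i => (occursAt_append α v true i).symm) (range M)
          rw [hcard]
        cases b
        · -- v ++ [false]
          have heq : ((v ++ [false]).map fun a => if a then p else 1 - p).prod
              = (v.map fun a => if a then p else 1 - p).prod
                - (v.map fun a => if a then p else 1 - p).prod * p := by
            simp; ring
          rw [heq]
          have hle : ∀ M : ℕ, ((range M).filter (OccursAt α (v ++ [true]))).card
              ≤ ((range M).filter (OccursAt α v)).card := fun M => by
            have := count_split α v M; omega
          refine Tendsto.congr (fun M => ?_) (tendsto_sub_count hle ihv hTrue)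
          have hs := count_split α v M
          have h3 : ((range M).filter (OccursAt α (v ++ [false]))).card
              = ((range M).filter (OccursAt α v)).card
                - ((range M).filter (OccursAt α (v ++ [true]))).card := by omega
          rw [h3]
        · -- v ++ [true]
          have heq : ((v ++ [true]).map fun a => if a then p else 1 - p).prod
              = (v.map fun a => if a then p else 1 - p).prod * p := by simp
          rw [heq]
          exact hTrue
end

section
/- Let p be a positive Bernoulli distribution on {0,1}, let S ⊆ {0,1}* be a strategy, and let F be a finite subset of {0,1}*. Let R = F \ { w : there exists u ∈ F with u a proper prefix of w } be the set obtained from F by removing words that already have a proper prefix in F. For each positive integer n define M_n = { w ∈ {0,1}^n : S(w) ∈ F }. Then μ_p(M_n) ≤ μ_p(R). -/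
open Filter
open scoped Classical

/-- `μ_p(w)`: the probability of the finite word `w` under the Bernoulli distribution `p`. -/
def wordProb (p : Bool → ℝ) (w : List Bool) : ℝ := (w.map p).prod

/-- The word selected from `w` by the strategy `S ⊆ {0,1}*`: the symbols `w_j` (in order)
such that the prefix `w_1 … w_(j-1)` belongs to `S`. -/
noncomputable def selectWord (S : Set (List Bool)) (w : List Bool) : List Bool :=
  (List.finRange w.length).filterMap fun (j : Fin w.length) =>
    if w.take (j : ℕ) ∈ S then some (w.get j) else none

lemma selectWord_cons (S : Set (List Bool)) (a : Bool) (v : List Bool) :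
    selectWord S (a :: v) = (if [] ∈ S then [a] else []) ++ selectWord {u | a :: u ∈ S} v := by
  unfold selectWord
  simp only [List.length_cons]
  rw [List.finRange_succ, List.filterMap_cons, List.filterMap_map]
  have hc : ((fun (j : Fin (v.length + 1)) =>
        if List.take (↑j) (a :: v) ∈ S then some ((a :: v).get j) else none) ∘ Fin.succ)
      = fun (j : Fin v.length) => if a :: List.take (↑j) v ∈ S then some (v.get j) else none := by
    funext j
    simp [Fin.val_succ, List.take_succ_cons]
    congr
  rw [hc]
  by_cases h : ([] : List Bool) ∈ S <;> simp [h]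

lemma wordProb_cons (p : Bool → ℝ) (a : Bool) (v : List Bool) :
    wordProb p (a :: v) = p a * wordProb p v := by simp [wordProb]

lemma wordProb_nonneg (p : Bool → ℝ) (hpos : ∀ a, 0 < p a) (w : List Bool) :
    0 ≤ wordProb p w := by
  induction w with
  | nil => simp [wordProb]
  | cons a v ih => rw [wordProb_cons]; exact mul_nonneg (hpos a).le ih

lemma ofFn_cons (n : ℕ) (a : Bool) (w : Fin n → Bool) :
    List.ofFn (Fin.cons a w) = a :: List.ofFn w := by
  rw [List.ofFn_succ]
  simp

lemma sum_cons_split (n : ℕ) (g : (Fin (n+1) → Bool) → ℝ) :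
    (∑ w : Fin (n+1) → Bool, g w) = ∑ a : Bool, ∑ w : Fin n → Bool, g (Fin.cons a w) := by
  rw [← (Fintype.sum_prod_type (f := fun x : Bool × (Fin n → Bool) => g (Fin.cons x.1 x.2)))]
  exact (Fintype.sum_equiv (Fin.insertNthEquiv (fun _ => Bool) 0) _ _ (fun x => by
    congr 1
    funext i
    induction i using Fin.cases <;> simp [Fin.insertNthEquiv])).symm

lemma total_one (p : Bool → ℝ) (hsum : p false + p true = 1) (n : ℕ) :
    (∑ w : Fin n → Bool, wordProb p (List.ofFn w)) = 1 := by
  induction n with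
  | zero => simp [wordProb]
  | succ n ih =>
      rw [sum_cons_split]
      have : ∀ a : Bool, (∑ w : Fin n → Bool, wordProb p (List.ofFn (Fin.cons a w))) = p a := by
        intro a
        simp only [ofFn_cons, wordProb_cons, ← Finset.mul_sum, ih, mul_one]
      simp only [this]
      rw [Fintype.sum_bool, add_comm, hsum]

lemma key (p : Bool → ℝ) (hpos : ∀ a, 0 < p a) (hsum : p false + p true = 1) :
    ∀ (n : ℕ) (S : Set (List Bool)) (r : List Bool),
    (∑ w : Fin n → Bool,
        if r <+: selectWord S (List.ofFn w) then wordProb p (List.ofFn w) else 0)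
      ≤ wordProb p r := by
  intro n
  induction n with
  | zero =>
      intro S r
      have hz : ∀ w : Fin 0 → Bool, List.ofFn w = [] := fun w => List.ofFn_zero
      have hsel : selectWord S [] = [] := by simp [selectWord]
      rcases r with _ | ⟨b, r⟩
      · simp [hz, wordProb]
      · have hnp : ¬ ((b :: r) <+: selectWord S ([] : List Bool)) := by
          rw [hsel]; intro h; exact List.cons_ne_nil _ _ (List.prefix_nil.mp h)
        calc (∑ w : Fin 0 → Bool,
            if (b :: r) <+: selectWord S (List.ofFn w) then wordProb p (List.ofFn w) else 0)
            ≤ 0 := by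
              apply Finset.sum_nonpos
              intro w _
              rw [hz, if_neg hnp]
          _ ≤ wordProb p (b :: r) := wordProb_nonneg p hpos _
  | succ n ih =>
      intro S r
      rw [sum_cons_split]
      simp only [ofFn_cons, selectWord_cons, wordProb_cons]
      by_cases hS : ([] : List Bool) ∈ S
      · simp only [if_pos hS]
        rcases r with _ | ⟨b, r⟩
        · -- r = [] : everything counts, total = 1
          have : ∀ a : Bool, (∑ w : Fin n → Bool,
              if ([] : List Bool) <+: ([a] ++ selectWord {u | a :: u ∈ S} (List.ofFn w))
              then p a * wordProb p (List.ofFn w) else 0)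
              = p a := by
            intro a
            simp only [List.nil_prefix, if_true, ← Finset.mul_sum, total_one p hsum, mul_one]
          simp only [this]
          rw [Fintype.sum_bool, add_comm, hsum, wordProb]
          simp
        · -- r = b :: r'
          have hstep : ∀ a : Bool, (∑ w : Fin n → Bool,
              if (b :: r) <+: ([a] ++ selectWord {u | a :: u ∈ S} (List.ofFn w))
              then p a * wordProb p (List.ofFn w) else 0)
              ≤ if a = b then p a * wordProb p r else 0 := by
            intro a
            by_cases hab : a = b
            · subst hab
              simp only [if_pos rfl]
              have hiff : ∀ w : Fin n → Bool,
                  ((a :: r) <+: ([a] ++ selectWord {u | a :: u ∈ S} (List.ofFn w)))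
                  ↔ r <+: selectWord {u | a :: u ∈ S} (List.ofFn w) := by
                intro w
                constructor
                · rintro ⟨t, ht⟩
                  exact ⟨t, by simpa using ht⟩
                · rintro ⟨t, ht⟩
                  exact ⟨t, by simp [ht]⟩
              calc (∑ w : Fin n → Bool,
                  if (a :: r) <+: ([a] ++ selectWord {u | a :: u ∈ S} (List.ofFn w))
                  then p a * wordProb p (List.ofFn w) else 0)
                  = p a * (∑ w : Fin n → Bool,
                    if r <+: selectWord {u | a :: u ∈ S} (List.ofFn w)
                    then wordProb p (List.ofFn w) else 0) := by
                    rw [Finset.mul_sum]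
                    apply Finset.sum_congr rfl
                    intro w _
                    rw [if_congr (hiff w) rfl rfl, mul_ite, mul_zero]
                _ ≤ p a * wordProb p r :=
                    mul_le_mul_of_nonneg_left (ih _ _) (hpos a).le
            · simp only [if_neg hab]
              apply Finset.sum_nonpos
              intro w _
              have : ¬ ((b :: r) <+: ([a] ++ selectWord {u | a :: u ∈ S} (List.ofFn w))) := by
                rintro ⟨t, ht⟩
                simp only [List.cons_append, List.singleton_append] at ht
                injection ht with h1 h2
                exact hab h1.symm
              rw [if_neg this]
          calc (∑ a : Bool, ∑ w : Fin n → Bool,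
              if (b :: r) <+: ([a] ++ selectWord {u | a :: u ∈ S} (List.ofFn w))
              then p a * wordProb p (List.ofFn w) else 0)
              ≤ ∑ a : Bool, if a = b then p a * wordProb p r else 0 :=
                Finset.sum_le_sum fun a _ => hstep a
            _ = p b * wordProb p r := by rw [Fintype.sum_bool]; cases b <;> simp
            _ = wordProb p (b :: r) := (wordProb_cons p b r).symm
      · simp only [if_neg hS, List.nil_append]
        have hstep : ∀ a : Bool, (∑ w : Fin n → Bool,
            if r <+: selectWord {u | a :: u ∈ S} (List.ofFn w)
            then p a * wordProb p (List.ofFn w) else 0)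
            ≤ p a * wordProb p r := by
          intro a
          calc (∑ w : Fin n → Bool,
              if r <+: selectWord {u | a :: u ∈ S} (List.ofFn w)
              then p a * wordProb p (List.ofFn w) else 0)
              = p a * (∑ w : Fin n → Bool,
                if r <+: selectWord {u | a :: u ∈ S} (List.ofFn w)
                then wordProb p (List.ofFn w) else 0) := by
                rw [Finset.mul_sum]
                apply Finset.sum_congr rfl
                intro w _
                rw [mul_ite, mul_zero]
            _ ≤ p a * wordProb p r := mul_le_mul_of_nonneg_left (ih _ _) (hpos a).le
        calc (∑ a : Bool, ∑ w : Fin n → Bool,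
            if r <+: selectWord {u | a :: u ∈ S} (List.ofFn w)
            then p a * wordProb p (List.ofFn w) else 0)
            ≤ ∑ a : Bool, p a * wordProb p r := Finset.sum_le_sum fun a _ => hstep a
          _ = wordProb p r := by rw [Fintype.sum_bool, ← add_mul, add_comm, hsum, one_mul]

lemma exists_min (F : Finset (List Bool)) :
    ∀ (n : ℕ) (w : List Bool), w.length ≤ n → w ∈ F →
      ∃ r ∈ F.filter (fun w => ¬ ∃ u ∈ F, u <+: w ∧ u ≠ w), r <+: w := by
  intro n
  induction n with
  | zero =>
      intro w hlen hw
      have hw0 : w = [] := List.length_eq_zero_iff.mp (Nat.le_zero.mp hlen)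
      subst hw0
      refine ⟨[], Finset.mem_filter.mpr ⟨hw, ?_⟩, List.prefix_refl _⟩
      rintro ⟨u, hu, hp, hne⟩
      exact hne (List.prefix_nil.mp hp)
  | succ n ih =>
      intro w hlen hw
      by_cases h : ∃ u ∈ F, u <+: w ∧ u ≠ w
      · obtain ⟨u, hu, hp, hne⟩ := h
        have hlt : u.length < w.length :=
          lt_of_le_of_ne hp.length_le (fun hl => hne (List.IsPrefix.eq_of_length hp hl))
        obtain ⟨r, hr, hrp⟩ := ih u (by omega) hu
        exact ⟨r, hr, hrp.trans hp⟩
      · exact ⟨w, Finset.mem_filter.mpr ⟨hw, h⟩, List.prefix_refl w⟩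

/-- Let `R` be obtained from the finite set `F` by removing all words that already have a
proper prefix in `F`, and let `M_n = {w ∈ {0,1}^n : S(w) ∈ F}`.  Then `μ_p(M_n) ≤ μ_p(R)`. -/
theorem mu_select_mem_le (p : Bool → ℝ) (hpos : ∀ a, 0 < p a)
    (hsum : p false + p true = 1)
    (S : Set (List Bool)) (F : Finset (List Bool)) (n : ℕ) (hn : 0 < n) :
    (∑ w : Fin n → Bool,
        if selectWord S (List.ofFn w) ∈ F then wordProb p (List.ofFn w) else 0) ≤
      ∑ u ∈ F.filter (fun w => ¬ ∃ u ∈ F, u <+: w ∧ u ≠ w), wordProb p u := by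
  classical
  set R := F.filter (fun w => ¬ ∃ u ∈ F, u <+: w ∧ u ≠ w) with hR
  have step1 : ∀ w : Fin n → Bool,
      (if selectWord S (List.ofFn w) ∈ F then wordProb p (List.ofFn w) else 0)
      ≤ ∑ r ∈ R, (if r <+: selectWord S (List.ofFn w) then wordProb p (List.ofFn w) else 0) := by
    intro w
    by_cases h : selectWord S (List.ofFn w) ∈ F
    · rw [if_pos h]
      obtain ⟨r, hr, hrp⟩ := exists_min F (selectWord S (List.ofFn w)).length _ le_rfl h
      have hts := Finset.single_le_sum
        (f := fun r => if r <+: selectWord S (List.ofFn w) then wordProb p (List.ofFn w) else 0)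
        (fun i _ => by
          split_ifs
          · exact wordProb_nonneg p hpos _
          · exact le_refl 0) hr
      simpa only [if_pos hrp] using hts
    · rw [if_neg h]
      apply Finset.sum_nonneg
      intro r _
      split_ifs
      · exact wordProb_nonneg p hpos _
      · exact le_refl 0
  calc (∑ w : Fin n → Bool,
        if selectWord S (List.ofFn w) ∈ F then wordProb p (List.ofFn w) else 0)
      ≤ ∑ w : Fin n → Bool, ∑ r ∈ R,
          (if r <+: selectWord S (List.ofFn w) then wordProb p (List.ofFn w) else 0) :=
        Finset.sum_le_sum fun w _ => step1 w
    _ = ∑ r ∈ R, ∑ w : Fin n → Bool,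
          (if r <+: selectWord S (List.ofFn w) then wordProb p (List.ofFn w) else 0) :=
        Finset.sum_comm
    _ ≤ ∑ r ∈ R, wordProb p r := Finset.sum_le_sum fun r _ => key p hpos hsum n S r
end

section
/- Let p be a positive Bernoulli distribution on {0,1}, let S ⊆ {0,1}* be a strategy, let n be a positive integer, and let u be any finite word over {0,1}. Then the set M_u = { w ∈ {0,1}^n : u is a prefix of S(w) } satisfies μ_p(M_u) ≤ μ_p(u). -/
open Filter
open scoped Classical

lemma wordProb_nil (p : Bool → ℝ) : wordProb p [] = 1 := by simp [wordProb]

lemma wordProb_append (p : Bool → ℝ) (v w : List Bool) :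
    wordProb p (v ++ w) = wordProb p v * wordProb p w := by
  simp [wordProb]

lemma selectWord_eq_range (S : Set (List Bool)) (w : List Bool) :
    selectWord S w = (List.range w.length).filterMap
      (fun j => if w.take j ∈ S then some (w.getD j false) else none) := by
  unfold selectWord
  rw [← List.map_coe_finRange_eq_range, List.filterMap_map]
  congr 1
  funext j
  simp only [Function.comp]
  rw [List.getD_eq_getElem w false j.isLt]
  rfl

lemma selectWord_append (S : Set (List Bool)) (w : List Bool) (a : Bool) :
    selectWord S (w ++ [a]) = selectWord S w ++ (if w ∈ S then [a] else []) := by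
  rw [selectWord_eq_range, selectWord_eq_range]
  have hlen : (w ++ [a]).length = w.length + 1 := by simp
  rw [hlen, List.range_succ, List.filterMap_append]
  congr 1
  · apply List.filterMap_congr
    intro j hj
    have hj' : j < w.length := List.mem_range.1 hj
    rw [List.take_append_of_le_length hj'.le,
      List.getD_eq_getElem _ false (show j < (w ++ [a]).length by simp; omega),
      List.getD_eq_getElem _ false hj', List.getElem_append_left hj']
  · have h1 : (w ++ [a]).take w.length = w := List.take_left
    have h2 : (w ++ [a]).getD w.length false = a := by
      rw [List.getD_eq_getElem _ false (show w.length < (w ++ [a]).length by simp)]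
      simp
    by_cases h : w ∈ S <;> simp [h1, h2, h]

/-- The martingale value. -/
noncomputable def hFun (p : Bool → ℝ) (u v : List Bool) : ℝ :=
  if u <+: v then 1 else if v <+: u then wordProb p (u.drop v.length) else 0

lemma hFun_nil (p : Bool → ℝ) (u : List Bool) : hFun p u [] = wordProb p u := by
  unfold hFun
  by_cases h : u <+: ([] : List Bool)
  · rw [if_pos h, List.prefix_nil.1 h, wordProb_nil]
  · rw [if_neg h, if_pos (List.nil_prefix)]
    simp

lemma hFun_nonneg (p : Bool → ℝ) (hpos : ∀ a, 0 < p a) (u v : List Bool) :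
    0 ≤ hFun p u v := by
  unfold hFun
  split
  · norm_num
  · split
    · exact wordProb_nonneg p hpos _
    · exact le_refl 0

lemma hFun_step (p : Bool → ℝ) (hpos : ∀ a, 0 < p a) (hsum : p false + p true = 1)
    (u v : List Bool) :
    p false * hFun p u (v ++ [false]) + p true * hFun p u (v ++ [true]) = hFun p u v := by
  by_cases h1 : u <+: v
  · have h2 : ∀ a : Bool, u <+: v ++ [a] := fun a => h1.trans (List.prefix_append v [a])
    simp only [hFun, if_pos h1, if_pos (h2 false), if_pos (h2 true)]
    linarith
  by_cases h3 : v <+: u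
  · -- u = v ++ b :: t'
    obtain ⟨t, rfl⟩ := h3
    have ht : t ≠ [] := by rintro rfl; simp at h1
    obtain ⟨b, t', rfl⟩ := List.exists_cons_of_ne_nil ht
    have key : ∀ a : Bool, hFun p (v ++ b :: t') (v ++ [a]) =
        if a = b then wordProb p t' else 0 := by
      intro a
      by_cases hab : a = b
      · subst hab
        by_cases hx : v ++ a :: t' <+: v ++ [a]
        · have h5 : t' = [] := by
            have := ((List.prefix_append_right_inj v).1 hx).length_le
            simpa using this
          subst h5
          simp [hFun, hx, wordProb_nil]
        · have hx2 : v ++ [a] <+: v ++ a :: t' :=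
            (List.prefix_append_right_inj v).2 (by simp)
          have hd : (v ++ a :: t').drop (v ++ [a]).length = t' := by
            rw [show v ++ a :: t' = (v ++ [a]) ++ t' by simp, List.drop_left]
          simp [hFun, hx, hx2, hd]
      · have hx : ¬ (v ++ b :: t' <+: v ++ [a]) := by
          intro hx
          have : b :: t' <+: [a] := (List.prefix_append_right_inj v).1 hx
          rcases this with ⟨s, hs⟩
          cases t' <;> simp_all
        have hx2 : ¬ (v ++ [a] <+: v ++ b :: t') := by
          intro hx2
          have : [a] <+: b :: t' := (List.prefix_append_right_inj v).1 hx2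
          rcases this with ⟨s, hs⟩
          simp at hs
          exact hab hs.1
        simp [hFun, hx, hx2, hab]
    rw [key false, key true]
    have hv : hFun p (v ++ b :: t') v = p b * wordProb p t' := by
      unfold hFun
      rw [if_neg h1, if_pos (List.prefix_append v _), List.drop_left]
      simp [wordProb]
    rw [hv]
    cases b <;> simp
  · -- neither prefix
    have key : ∀ a : Bool, hFun p u (v ++ [a]) = 0 := by
      intro a
      unfold hFun
      have hx : ¬ u <+: v ++ [a] := by
        intro hx
        rcases List.prefix_concat_iff.1 hx with h | h
        · exact h3 (by rw [h]; exact List.prefix_append v [a])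
        · exact h1 h
      have hx2 : ¬ v ++ [a] <+: u := fun hx2 => h3 ((List.prefix_append v [a]).trans hx2)
      rw [if_neg hx, if_neg hx2]
    rw [key, key, hFun, if_neg h1, if_neg h3]
    ring

lemma sum_hFun (p : Bool → ℝ) (hpos : ∀ a, 0 < p a) (hsum : p false + p true = 1)
    (S : Set (List Bool)) (u : List Bool) : ∀ n : ℕ,
    (∑ w : Fin n → Bool, wordProb p (List.ofFn w) * hFun p u (selectWord S (List.ofFn w)))
      = wordProb p u := by
  intro n
  induction n with
  | zero =>
    have h0 : ∀ w : Fin 0 → Bool,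
        wordProb p (List.ofFn w) * hFun p u (selectWord S (List.ofFn w)) = wordProb p u := by
      intro w
      have h : List.ofFn w = [] := by simp
      rw [h, wordProb_nil, one_mul, show selectWord S [] = [] from by simp [selectWord],
        hFun_nil]
    rw [Finset.sum_congr rfl (fun w _ => h0 w), Finset.sum_const]
    simp
  | succ n ih =>
    rw [← ih]
    rw [← (Fin.snocEquiv (fun _ => Bool)).sum_comp
      (fun w => wordProb p (List.ofFn w) * hFun p u (selectWord S (List.ofFn w)))]
    rw [Fintype.sum_prod_type]
    rw [Finset.sum_comm]
    apply Finset.sum_congr rfl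
    intro w _
    have hofn : ∀ a : Bool, List.ofFn (Fin.snocEquiv (fun _ => Bool) (a, w)) =
        List.ofFn w ++ [a] := by
      intro a
      rw [List.ofFn_succ']
      simp [Fin.snocEquiv, List.concat_eq_append]
    have expand : ∀ a : Bool,
        wordProb p (List.ofFn (Fin.snocEquiv (fun _ => Bool) (a, w))) *
          hFun p u (selectWord S (List.ofFn (Fin.snocEquiv (fun _ => Bool) (a, w)))) =
        wordProb p (List.ofFn w) * p a *
          hFun p u (selectWord S (List.ofFn w) ++ if List.ofFn w ∈ S then [a] else []) := by
      intro a
      rw [hofn a, wordProb_append, selectWord_append]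
      simp [wordProb]
    rw [Fintype.sum_bool, expand true, expand false]
    set W := wordProb p (List.ofFn w) with hW
    set sv := selectWord S (List.ofFn w) with hsv
    by_cases hS : List.ofFn w ∈ S
    · simp only [if_pos hS]
      calc W * p true * hFun p u (sv ++ [true]) + W * p false * hFun p u (sv ++ [false])
          = W * (p false * hFun p u (sv ++ [false]) + p true * hFun p u (sv ++ [true])) := by
            ring
        _ = W * hFun p u sv := by rw [hFun_step p hpos hsum u sv]
    · simp only [if_neg hS, List.append_nil]
      calc W * p true * hFun p u sv + W * p false * hFun p u sv
          = W * hFun p u sv * (p false + p true) := by ring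
        _ = W * hFun p u sv := by rw [hsum, mul_one]

/-- For any word `u`, the set `M_u = {w ∈ {0,1}^n : u is a prefix of S(w)}` satisfies
`μ_p(M_u) ≤ μ_p(u)`. -/
theorem mu_prefix_select_le (p : Bool → ℝ) (hpos : ∀ a, 0 < p a)
    (hsum : p false + p true = 1)
    (S : Set (List Bool)) (n : ℕ) (hn : 0 < n) (u : List Bool) :
    (∑ w : Fin n → Bool,
        if u <+: selectWord S (List.ofFn w) then wordProb p (List.ofFn w) else 0) ≤
      wordProb p u := by
  rw [← sum_hFun p hpos hsum S u n]
  apply Finset.sum_le_sum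
  intro w _
  by_cases h : u <+: selectWord S (List.ofFn w)
  · rw [if_pos h]
    have h1 : hFun p u (selectWord S (List.ofFn w)) = 1 := by rw [hFun, if_pos h]
    rw [h1, mul_one]
  · rw [if_neg h]
    exact mul_nonneg (wordProb_nonneg p hpos _) (hFun_nonneg p hpos _ _)
end
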